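/- arXiv:0704.3355 — 4 statements merged into one kernel-verified Lean document; each statement's English description precedes it below -/
import Mathlib

section
/- Let $K$ be a field of characteristic $2$, $G$ a group, $z$ a central element of $G$ with $z^2 = 1$ and $z \neq 1$, $b \in G$, and let $g_1, \dots, g_t \in G$ be pairwise distinct elements such that $g_i^{-1} g_j \neq z$ for all $i, j$. Then the subgroup $X$ of the unit group of $KG$ generated by the elements $h_i = 1 + b g_i (1+z)$, $1 \leq i \leq t$, is an elementary abelian $2$-group of order $2^t$; more precisely, the map $(\mathbb{Z}/2\mathbb{Z})^t \to X$ sending $(e_1,\dots,e_t)$ to $h_1^{e_1} \cdots h_t^{e_t}$ is a group isomorphism. -/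
private lemma aux_prod {R : Type*} [Ring R] : ∀ (t : ℕ) (A : Fin t → R),
    (∀ i j, A i * A j = 0) →
    (List.ofFn fun i => 1 + A i).prod = 1 + ∑ i, A i := by
  intro t
  induction t with
  | zero => intro A hA; simp
  | succ n ih =>
    intro A hA
    rw [List.ofFn_succ, List.prod_cons, ih _ (fun i j => hA _ _), Fin.sum_univ_succ]
    have h0 : A 0 * ∑ i : Fin n, A i.succ = 0 := by
      rw [Finset.mul_sum]
      exact Finset.sum_eq_zero fun i _ => hA _ _
    have expand : (1 + A 0) * (1 + ∑ i : Fin n, A i.succ)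
        = 1 + (A 0 + ∑ i : Fin n, A i.succ) + A 0 * ∑ i : Fin n, A i.succ := by noncomm_ring
    rw [expand, h0, add_zero]

private lemma aux_mod_smul {R : Type*} [AddCommMonoid R] (x : R) (hx : x + x = 0) (m : ℕ) :
    m • x = (m % 2) • x := by
  conv_lhs => rw [← Nat.div_add_mod m 2]
  rw [add_smul, mul_comm, mul_smul]
  have h2 : (2:ℕ) • x = 0 := by rw [two_nsmul, hx]
  rw [h2, smul_zero, zero_add]



/-- The elements `hᵢ = 1 + b gᵢ (1+z)` (with the `gᵢ` distinct and
`gᵢ⁻¹ gⱼ ≠ z`) are units generating an elementary abelian group of order `2^t`,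
isomorphic to `(ℤ/2ℤ)^t` via `(e₁,…,e_t) ↦ h₁^{e₁} ⋯ h_t^{e_t}`. -/
theorem generated_group_elementary_abelian
    (K G : Type*) [Field K] [CharP K 2] [Group G]
    (z : G) (hzc : z ∈ Subgroup.center G) (hz2 : z ^ 2 = 1) (hz1 : z ≠ 1)
    (b : G) (t : ℕ) (g : Fin t → G) (hinj : Function.Injective g)
    (hne : ∀ i j, (g i)⁻¹ * g j ≠ z) :
    letI o := MonoidAlgebra.of K G
    ∃ u : Fin t → (MonoidAlgebra K G)ˣ,
      (∀ i, (u i : MonoidAlgebra K G) = 1 + o (b * g i) * (1 + o z)) ∧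
      Nat.card (Subgroup.closure (Set.range u)) = 2 ^ t ∧
      ∃ φ : (Fin t → Multiplicative (ZMod 2)) ≃* Subgroup.closure (Set.range u),
        ∀ e : Fin t → Multiplicative (ZMod 2),
          ((φ e : Subgroup.closure (Set.range u)) : (MonoidAlgebra K G)ˣ)
            = (List.ofFn fun i : Fin t =>
                u i ^ (Multiplicative.toAdd (e i)).val).prod := by
  classical
  set o := MonoidAlgebra.of K G with ho
  have haddself : ∀ x : MonoidAlgebra K G, x + x = 0 := by
    intro x
    have h2 : ((2:ℕ) : MonoidAlgebra K G) = 0 := by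
      rw [← map_natCast (algebraMap K (MonoidAlgebra K G)) 2, CharP.cast_eq_zero K 2, map_zero]
    rw [← two_nsmul, nsmul_eq_mul, h2, zero_mul]
  have hzsq : ((1 : MonoidAlgebra K G) + o z) * (1 + o z) = 0 := by
    have h1 : o z * o z = 1 := by rw [← map_mul, ← sq, hz2, map_one]
    have expand : ((1 : MonoidAlgebra K G) + o z) * (1 + o z)
        = 1 + o z * o z + (o z + o z) := by noncomm_ring
    rw [expand, h1, haddself, haddself, add_zero]
  have hcomm : ∀ w : G, ((1 : MonoidAlgebra K G) + o z) * o w = o w * (1 + o z) := by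
    intro w
    have hzw : z * w = w * z := (Subgroup.mem_center_iff.mp hzc w).symm
    rw [add_mul, mul_add, one_mul, mul_one, ← map_mul, hzw, map_mul]
  set a : Fin t → MonoidAlgebra K G := fun i => o (b * g i) * (1 + o z) with ha_def
  have hmul : ∀ i j, a i * a j = 0 := by
    intro i j
    show o (b * g i) * (1 + o z) * (o (b * g j) * (1 + o z)) = 0
    rw [mul_assoc, ← mul_assoc (1 + o z), hcomm, mul_assoc, hzsq, mul_zero, mul_zero]
  have hunit : ∀ i, ((1 : MonoidAlgebra K G) + a i) * (1 + a i) = 1 := by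
    intro i
    have expand : ((1 : MonoidAlgebra K G) + a i) * (1 + a i)
        = 1 + a i * a i + (a i + a i) := by noncomm_ring
    rw [expand, hmul, add_zero, haddself, add_zero]
  set u : Fin t → (MonoidAlgebra K G)ˣ := fun i => ⟨1 + a i, 1 + a i, hunit i, hunit i⟩ with hu_def
  set m : (Fin t → Multiplicative (ZMod 2)) → Fin t → ℕ :=
    fun e i => (Multiplicative.toAdd (e i)).val with hm_def
  set S : (Fin t → Multiplicative (ZMod 2)) → MonoidAlgebra K G :=
    fun e => ∑ i, m e i • a i with hS_def
  have hsmulmul : ∀ (c d : ℕ) (i j : Fin t), (c • a i) * (d • a j) = 0 := by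
    intro c d i j
    rw [smul_mul_assoc, mul_smul_comm, hmul, smul_zero, smul_zero]
  have hSS : ∀ e f, S e * S f = 0 := by
    intro e f
    rw [hS_def, Finset.sum_mul_sum]
    exact Finset.sum_eq_zero fun i _ => Finset.sum_eq_zero fun j _ => hsmulmul _ _ _ _
  have hval01 : ∀ c : ZMod 2, c.val = 0 ∨ c.val = 1 := by decide
  have hpowval : ∀ (e : Fin t → Multiplicative (ZMod 2)) (i : Fin t),
      ((u i ^ m e i : (MonoidAlgebra K G)ˣ) : MonoidAlgebra K G) = 1 + m e i • a i := by
    intro e i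
    rcases hval01 (Multiplicative.toAdd (e i)) with h | h <;>
      · have : m e i = _ := h
        rw [this]
        simp [hu_def]
  have hlist : ∀ e, (((List.ofFn fun i => u i ^ m e i).prod : (MonoidAlgebra K G)ˣ) :
      MonoidAlgebra K G) = 1 + S e := by
    intro e
    rw [← Units.coeHom_apply, map_list_prod, List.map_ofFn]
    have := aux_prod t (fun i => m e i • a i) (fun i j => hsmulmul _ _ _ _)
    rw [hS_def, ← this]
    exact congrArg List.prod (congrArg List.ofFn (funext fun i => hpowval e i))
  have hSadd : ∀ e f, S (e * f) = S e + S f := by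
    intro e f
    rw [hS_def, ← Finset.sum_add_distrib]
    refine Finset.sum_congr rfl fun i _ => ?_
    rw [← add_smul]
    have hv : m (e * f) i = (m e i + m f i) % 2 := by
      rw [hm_def]
      simp only [Pi.mul_apply, toAdd_mul]
      exact ZMod.val_add _ _
    rw [hv]
    exact (aux_mod_smul _ (haddself _) _).symm
  have hprodval : ∀ e f, ((1 : MonoidAlgebra K G) + S e) * (1 + S f) = 1 + S (e * f) := by
    intro e f
    have expand : ((1 : MonoidAlgebra K G) + S e) * (1 + S f)
        = 1 + (S e + S f) + S e * S f := by noncomm_ring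
    rw [expand, hSS, add_zero, hSadd]
  have ha1 : ∀ i, a i = MonoidAlgebra.single (b * g i) 1 + MonoidAlgebra.single (b * g i * z) 1 := by
    intro i
    show o (b * g i) * (1 + o z) = _
    rw [mul_add, mul_one, ← map_mul, ho, MonoidAlgebra.of_apply, MonoidAlgebra.of_apply]
  have hSapply : ∀ e (i0 : Fin t), (S e).coeff (b * g i0) = (m e i0 : K) := by
    intro e i0
    rw [hS_def, MonoidAlgebra.coeff_sum, Finsupp.finset_sum_apply]
    have hterm : ∀ i : Fin t, ((m e i • a i : MonoidAlgebra K G)).coeff (b * g i0)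
        = if i = i0 then (m e i0 : K) else 0 := by
      intro i
      rw [MonoidAlgebra.coeff_smul_apply, ha1 i, MonoidAlgebra.coeff_add, Finsupp.add_apply,
        MonoidAlgebra.single_apply, MonoidAlgebra.single_apply]
      have hfalse : ¬ (b * g i * z = b * g i0) := by
        intro hcontr
        rw [mul_assoc] at hcontr
        apply hne i i0
        rw [← mul_left_cancel hcontr, inv_mul_cancel_left]
      rw [if_neg hfalse, add_zero]
      by_cases hii : i = i0
      · subst hii
        rw [if_pos rfl, if_pos rfl, nsmul_eq_mul, mul_one]
      · rw [if_neg (fun h => hii (hinj (mul_left_cancel h))), smul_zero, if_neg hii]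
    rw [Finset.sum_congr rfl (fun i _ => hterm i), Finset.sum_ite_eq']
    exact if_pos (Finset.mem_univ i0)
  have hmem : ∀ e, (List.ofFn fun i => u i ^ m e i).prod ∈ Subgroup.closure (Set.range u) := by
    intro e
    refine list_prod_mem fun x hx => ?_
    obtain ⟨i, rfl⟩ := List.mem_ofFn.mp hx
    exact pow_mem (Subgroup.subset_closure (Set.mem_range_self i)) _
  set φ₀ : (Fin t → Multiplicative (ZMod 2)) →* (MonoidAlgebra K G)ˣ :=
    { toFun := fun e => (List.ofFn fun i => u i ^ m e i).prod
      map_one' := by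
        apply Units.ext
        rw [Units.val_one, hlist]
        have h0 : S 1 = 0 := by
          rw [hS_def]
          refine Finset.sum_eq_zero fun i _ => ?_
          have hm1 : m 1 i = 0 := rfl
          rw [hm1, zero_smul]
        rw [h0, add_zero]
      map_mul' := by
        intro e f
        apply Units.ext
        rw [Units.val_mul, hlist, hlist, hlist, hprodval] } with hφ₀_def
  have hinj₀ : Function.Injective φ₀ := by
    intro e f hef
    have hv : (1 : MonoidAlgebra K G) + S e = 1 + S f := by
      rw [← hlist e, ← hlist f]
      exact congrArg Units.val hef
    have hS' : S e = S f := add_left_cancel hv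
    funext i0
    have h1 := congrArg (fun x : MonoidAlgebra K G => x.coeff (b * g i0)) hS'
    rw [hSapply, hSapply] at h1
    have hval : m e i0 = m f i0 := by
      have hme : m e i0 = (Multiplicative.toAdd (e i0)).val := rfl
      have hmf : m f i0 = (Multiplicative.toAdd (f i0)).val := rfl
      rw [hme, hmf] at h1 ⊢
      rcases hval01 (Multiplicative.toAdd (e i0)) with h2 | h2 <;>
        rcases hval01 (Multiplicative.toAdd (f i0)) with h3 | h3 <;>
        rw [h2, h3] at h1 ⊢ <;>
        first
          | rfl
          | (exfalso; norm_num at h1)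
    exact Multiplicative.toAdd.injective (ZMod.val_injective 2 hval)
  have hrange : φ₀.range = Subgroup.closure (Set.range u) := by
    apply le_antisymm
    · rintro x ⟨e, rfl⟩
      exact hmem e
    · rw [Subgroup.closure_le]
      rintro x ⟨i, rfl⟩
      refine ⟨Pi.mulSingle i (Multiplicative.ofAdd 1), ?_⟩
      apply Units.ext
      show ((List.ofFn fun j => u j ^ m (Pi.mulSingle i (Multiplicative.ofAdd 1)) j).prod :
        (MonoidAlgebra K G)ˣ).val = _
      rw [hlist]
      have hSi : S (Pi.mulSingle i (Multiplicative.ofAdd 1)) = a i := by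
        simp only [hS_def]
        rw [Finset.sum_eq_single i]
        · have h1 : m (Pi.mulSingle i (Multiplicative.ofAdd 1)) i = 1 := by
            simp only [hm_def, Pi.mulSingle_eq_same, toAdd_ofAdd]
            decide
          rw [h1, one_smul]
        · intro j _ hj
          have h0 : m (Pi.mulSingle i (Multiplicative.ofAdd 1)) j = 0 := by
            simp [hm_def, Pi.mulSingle_eq_of_ne hj]
          rw [h0, zero_smul]
        · intro h
          exact absurd (Finset.mem_univ i) h
      rw [hSi]
  let φ := (MonoidHom.ofInjective hinj₀).trans (MulEquiv.subgroupCongr hrange)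
  have hcard : Nat.card (Subgroup.closure (Set.range u)) = 2 ^ t := by
    rw [← Nat.card_congr φ.toEquiv]
    simp [Nat.card_eq_fintype_card]
  exact ⟨u, fun i => rfl, hcard, φ, fun e => rfl⟩
end

section
/- Let $K$ be a field of characteristic $2$, let $G$ be a group, let $z$ be a central element of $G$ with $z^2 = 1$ and $z \neq 1$, let $a, b \in G$, and let $n$ be a positive integer such that: the conjugates $b^{a^i} = a^{-i} b a^{i}$ for $0 \leq i < n$ are pairwise distinct; $(b^{a^i})^{-1} b^{a^j} \neq z$ for all $0 \leq i, j < n$; and $a^{n}$ commutes with $b$. Set $h = 1 + b(1+z)$ in $KG$ and let $X$ be the subgroup of the unit group of $KG$ generated by the conjugates $a^{-i} h a^{i}$, $0 \leq i < n$. Then $X$ is an elementary abelian $2$-group of order $2^{n}$ which is normalized by $a$, conjugation by $a$ permutes the generators $a^{-i} h a^{i}$ cyclically, and $a^{n}$ centralizes $X$. -/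
open Finset
open scoped symmDiff

set_option linter.unusedSectionVars false

namespace ConjElemAbAux

variable {K G : Type*} [Field K] [CharP K 2] [Group G]

theorem two_eq_zero' : (2 : MonoidAlgebra K G) = 0 := by
  have h2 : (2 : K) = 0 := by exact_mod_cast CharP.cast_eq_zero K 2
  rw [← map_ofNat (algebraMap K (MonoidAlgebra K G)) 2, h2, map_zero]

theorem add_self' (x : MonoidAlgebra K G) : x + x = 0 := by
  rw [← two_mul, two_eq_zero', zero_mul]

variable (K) in
noncomputable def tt (z a b : G) (i : ℕ) : MonoidAlgebra K G :=
  MonoidAlgebra.of K G ((a ^ i)⁻¹ * b * a ^ i) * (1 + MonoidAlgebra.of K G z)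

theorem omega_com {z : G} (hzc : z ∈ Subgroup.center G) (g : G) :
    (1 + MonoidAlgebra.of K G z) * MonoidAlgebra.of K G g
      = MonoidAlgebra.of K G g * (1 + MonoidAlgebra.of K G z) := by
  rw [add_mul, mul_add, one_mul, mul_one, ← map_mul, ← map_mul,
    Subgroup.mem_center_iff.mp hzc g]

theorem omega_sq {z : G} (hz2 : z ^ 2 = 1) :
    (1 + MonoidAlgebra.of K G z) * (1 + MonoidAlgebra.of K G z) = 0 := by
  have h1 : MonoidAlgebra.of K G z * MonoidAlgebra.of K G z = 1 := by
    rw [← map_mul, ← pow_two, hz2, map_one]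
  rw [mul_add, mul_one, add_mul, one_mul, h1]
  calc (1 : MonoidAlgebra K G) + MonoidAlgebra.of K G z
        + (MonoidAlgebra.of K G z + 1)
      = (1 + MonoidAlgebra.of K G z) + (1 + MonoidAlgebra.of K G z) := by abel
    _ = 0 := add_self' _

theorem mul_omega_mul_zero {z : G} (hzc : z ∈ Subgroup.center G) (hz2 : z ^ 2 = 1) (g g' : G) :
    (MonoidAlgebra.of K G g * (1 + MonoidAlgebra.of K G z)) *
      (MonoidAlgebra.of K G g' * (1 + MonoidAlgebra.of K G z)) = 0 := by
  calc (MonoidAlgebra.of K G g * (1 + MonoidAlgebra.of K G z)) *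
      (MonoidAlgebra.of K G g' * (1 + MonoidAlgebra.of K G z))
      = MonoidAlgebra.of K G g * (((1 + MonoidAlgebra.of K G z) * MonoidAlgebra.of K G g')
          * (1 + MonoidAlgebra.of K G z)) := by noncomm_ring
    _ = MonoidAlgebra.of K G g * ((MonoidAlgebra.of K G g' * (1 + MonoidAlgebra.of K G z))
          * (1 + MonoidAlgebra.of K G z)) := by rw [omega_com hzc]
    _ = 0 := by
        rw [mul_assoc (MonoidAlgebra.of K G g'), omega_sq hz2, mul_zero, mul_zero]

theorem tt_mul_tt {z : G} (hzc : z ∈ Subgroup.center G) (hz2 : z ^ 2 = 1) (a b : G) (i j : ℕ) :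
    tt K z a b i * tt K z a b j = 0 := mul_omega_mul_zero hzc hz2 _ _

theorem conj_one_add {z : G} (hzc : z ∈ Subgroup.center G) (g u : G) :
    MonoidAlgebra.of K G g⁻¹ * (1 + MonoidAlgebra.of K G u * (1 + MonoidAlgebra.of K G z))
        * MonoidAlgebra.of K G g
      = 1 + MonoidAlgebra.of K G (g⁻¹ * u * g) * (1 + MonoidAlgebra.of K G z) := by
  calc MonoidAlgebra.of K G g⁻¹ * (1 + MonoidAlgebra.of K G u * (1 + MonoidAlgebra.of K G z))
        * MonoidAlgebra.of K G g
      = MonoidAlgebra.of K G g⁻¹ * MonoidAlgebra.of K G g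
        + (MonoidAlgebra.of K G g⁻¹ * MonoidAlgebra.of K G u)
          * ((1 + MonoidAlgebra.of K G z) * MonoidAlgebra.of K G g) := by noncomm_ring
    _ = MonoidAlgebra.of K G g⁻¹ * MonoidAlgebra.of K G g
        + (MonoidAlgebra.of K G g⁻¹ * MonoidAlgebra.of K G u)
          * (MonoidAlgebra.of K G g * (1 + MonoidAlgebra.of K G z)) := by rw [omega_com hzc]
    _ = 1 + MonoidAlgebra.of K G (g⁻¹ * u * g) * (1 + MonoidAlgebra.of K G z) := by
        rw [← map_mul, inv_mul_cancel, map_one, ← mul_assoc, ← map_mul, ← map_mul]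

theorem ee_mul_ee {α : Type*} [DecidableEq α] (F : α → MonoidAlgebra K G)
    (h0 : ∀ i j, F i * F j = 0) (S T : Finset α) :
    (1 + ∑ i ∈ S, F i) * (1 + ∑ i ∈ T, F i) = 1 + ∑ i ∈ S ∆ T, F i := by
  have hcross : (∑ i ∈ S, F i) * (∑ i ∈ T, F i) = 0 := by
    rw [Finset.sum_mul_sum]
    exact Finset.sum_eq_zero fun i _ => Finset.sum_eq_zero fun j _ => h0 i j
  have hsum : (∑ i ∈ S, F i) + (∑ i ∈ T, F i) = ∑ i ∈ S ∆ T, F i := by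
    calc (∑ i ∈ S, F i) + (∑ i ∈ T, F i)
        = (∑ i ∈ S \ T, F i + ∑ i ∈ S ∩ T, F i)
          + (∑ i ∈ T \ S, F i + ∑ i ∈ T ∩ S, F i) := by
          rw [← Finset.sum_union (Finset.disjoint_sdiff_inter S T),
            ← Finset.sum_union (Finset.disjoint_sdiff_inter T S),
            Finset.sdiff_union_inter, Finset.sdiff_union_inter]
      _ = (∑ i ∈ S \ T, F i + ∑ i ∈ T \ S, F i)
          + (∑ i ∈ S ∩ T, F i + ∑ i ∈ S ∩ T, F i) := by rw [Finset.inter_comm T S]; abel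
      _ = ∑ i ∈ (S \ T) ∪ (T \ S), F i := by
          rw [add_self', add_zero, Finset.sum_union disjoint_sdiff_sdiff]
      _ = ∑ i ∈ S ∆ T, F i := by rw [symmDiff_def, Finset.sup_eq_union]
  calc (1 + ∑ i ∈ S, F i) * (1 + ∑ i ∈ T, F i)
      = 1 + ((∑ i ∈ S, F i) + (∑ i ∈ T, F i)) + (∑ i ∈ S, F i) * (∑ i ∈ T, F i) := by
        noncomm_ring
    _ = 1 + ∑ i ∈ S ∆ T, F i := by rw [hcross, add_zero, hsum]

open scoped Classical in
theorem tt_apply (z a b : G) (i : ℕ) (x : G) :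
    (tt K z a b i).coeff x = (if (a ^ i)⁻¹ * b * a ^ i = x then 1 else 0)
      + (if (a ^ i)⁻¹ * b * a ^ i * z = x then (1 : K) else 0) := by
  rw [tt, mul_add, mul_one, ← map_mul]
  rw [MonoidAlgebra.of_apply, MonoidAlgebra.of_apply]
  rw [MonoidAlgebra.coeff_add, Finsupp.add_apply]
  rw [MonoidAlgebra.coeff_single_apply, MonoidAlgebra.coeff_single_apply]

end ConjElemAbAux

namespace ConjElemAbAux
theorem comm_tt {K G : Type*} [Field K] [CharP K 2] [Group G] {z : G}
    (hzc : z ∈ Subgroup.center G) (g u : G) (hgu : Commute g u) :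
    MonoidAlgebra.of K G g * (MonoidAlgebra.of K G u * (1 + MonoidAlgebra.of K G z))
      = (MonoidAlgebra.of K G u * (1 + MonoidAlgebra.of K G z)) * MonoidAlgebra.of K G g := by
  rw [← mul_assoc, ← map_mul, hgu.eq, map_mul, mul_assoc, ← omega_com hzc g, ← mul_assoc]
end ConjElemAbAux

open Finset in
open scoped symmDiff in
theorem ConjElemAbAux.sum_tt_inj {K G : Type*} [Field K] [CharP K 2] [Group G]
    {z a b : G} {n : ℕ}
    (hdist : ∀ i < n, ∀ j < n,
      (a ^ i)⁻¹ * b * a ^ i = (a ^ j)⁻¹ * b * a ^ j → i = j)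
    (hnez : ∀ i < n, ∀ j < n,
      ((a ^ i)⁻¹ * b * a ^ i)⁻¹ * ((a ^ j)⁻¹ * b * a ^ j) ≠ z)
    {S T : Finset (Fin n)}
    (h : ∑ i ∈ S, tt K z a b i.val = ∑ i ∈ T, tt K z a b i.val) : S = T := by
  classical
  have key : ∀ (U : Finset (Fin n)) (j : Fin n),
      (∑ i ∈ U, tt K z a b i.val).coeff ((a ^ (j:ℕ))⁻¹ * b * a ^ (j:ℕ)) =
        if j ∈ U then (1:K) else 0 := by
    intro U j
    rw [MonoidAlgebra.coeff_sum, Finsupp.finset_sum_apply]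
    have hterm : ∀ i : Fin n,
        (tt K z a b i.val).coeff ((a ^ (j:ℕ))⁻¹ * b * a ^ (j:ℕ)) = if i = j then (1:K) else 0 := by
      intro i
      rw [tt_apply]
      have h2 : ¬ ((a ^ (i:ℕ))⁻¹ * b * a ^ (i:ℕ) * z = (a ^ (j:ℕ))⁻¹ * b * a ^ (j:ℕ)) := by
        intro hc
        exact hnez i.val i.isLt j.val j.isLt (by rw [← hc, ← mul_assoc, inv_mul_cancel, one_mul])
      rw [if_neg h2, add_zero]
      by_cases hij : i = j
      · subst hij; rw [if_pos rfl, if_pos rfl]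
      · rw [if_neg, if_neg hij]
        intro hc
        exact hij (Fin.ext (hdist i.val i.isLt j.val j.isLt hc))
    rw [Finset.sum_congr rfl fun i _ => hterm i, Finset.sum_ite_eq' U j fun _ => (1:K)]
  ext j
  have hkey := key S j
  rw [h, key T j] at hkey
  by_cases hS : j ∈ S <;> by_cases hT : j ∈ T
  · simp [hS, hT]
  · rw [if_pos hS, if_neg hT] at hkey; exact absurd hkey.symm one_ne_zero
  · rw [if_neg hS, if_pos hT] at hkey; exact absurd hkey one_ne_zero
  · simp [hS, hT]

open Finset in
open scoped symmDiff in
noncomputable def ConjElemAbAux.eu (K : Type*) {G : Type*} [Field K] [CharP K 2] [Group G]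
    (z a b : G) (hzc : z ∈ Subgroup.center G) (hz2 : z ^ 2 = 1)
    {n : ℕ} (S : Finset (Fin n)) : (MonoidAlgebra K G)ˣ where
  val := 1 + ∑ i ∈ S, tt K z a b i.val
  inv := 1 + ∑ i ∈ S, tt K z a b i.val
  val_inv := by
    classical
    rw [ee_mul_ee (fun i : Fin n => tt K z a b i.val) (fun i j => tt_mul_tt hzc hz2 a b i.val j.val)]
    simp [symmDiff_self, Finset.bot_eq_empty]
  inv_val := by
    classical
    rw [ee_mul_ee (fun i : Fin n => tt K z a b i.val) (fun i j => tt_mul_tt hzc hz2 a b i.val j.val)]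
    simp [symmDiff_self, Finset.bot_eq_empty]

open Finset in
open scoped symmDiff in
theorem ConjElemAbAux.eu_mul (K : Type*) {G : Type*} [Field K] [CharP K 2] [Group G]
    (z a b : G) (hzc : z ∈ Subgroup.center G) (hz2 : z ^ 2 = 1)
    {n : ℕ} (S T : Finset (Fin n)) :
    eu K z a b hzc hz2 S * eu K z a b hzc hz2 T = eu K z a b hzc hz2 (S ∆ T) :=
  Units.ext (ee_mul_ee (fun i : Fin n => tt K z a b i.val) (fun i j => tt_mul_tt hzc hz2 a b i.val j.val) S T)

open Finset ConjElemAbAux in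
open scoped symmDiff in
set_option maxHeartbeats 8000000 in
/-- The conjugates `a⁻ⁱ h aⁱ` of `h = 1 + b(1+z)` generate an elementary abelian
group `X` of order `2^n`, normalized by `a`, on which conjugation by `a` permutes
the generators cyclically and which is centralized by `a^n`. -/
theorem conjugates_generate_elementary_abelian
    (K G : Type*) [Field K] [CharP K 2] [Group G]
    (z : G) (hzc : z ∈ Subgroup.center G) (hz2 : z ^ 2 = 1) (hz1 : z ≠ 1)
    (a b : G) (n : ℕ) (hn : 0 < n)
    (hdist : ∀ i < n, ∀ j < n,
      (a ^ i)⁻¹ * b * a ^ i = (a ^ j)⁻¹ * b * a ^ j → i = j)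
    (hnez : ∀ i < n, ∀ j < n,
      ((a ^ i)⁻¹ * b * a ^ i)⁻¹ * ((a ^ j)⁻¹ * b * a ^ j) ≠ z)
    (hab : Commute (a ^ n) b) :
    letI o := MonoidAlgebra.of K G
    letI A : (MonoidAlgebra K G)ˣ := (MonoidAlgebra.of K G).toHomUnits a
    ∃ hu : (MonoidAlgebra K G)ˣ,
      (hu : MonoidAlgebra K G) = 1 + o b * (1 + o z) ∧
      letI c : ℕ → (MonoidAlgebra K G)ˣ := fun i => (A ^ i)⁻¹ * hu * A ^ i
      letI X := Subgroup.closure {x | ∃ i < n, x = c i}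
      Nat.card X = 2 ^ n ∧
      (∀ x ∈ X, x * x = 1) ∧
      (∀ x ∈ X, ∀ y ∈ X, x * y = y * x) ∧
      (∀ x ∈ X, A⁻¹ * x * A ∈ X) ∧
      (∀ i < n, A⁻¹ * c i * A = c ((i + 1) % n)) ∧
      (∀ x ∈ X, A ^ n * x = x * A ^ n) := by
  classical
  set o := MonoidAlgebra.of K G with ho
  set A : (MonoidAlgebra K G)ˣ := (MonoidAlgebra.of K G).toHomUnits a with hA
  set E : Finset (Fin n) → (MonoidAlgebra K G)ˣ := eu K z a b hzc hz2 with hE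
  have hEval : ∀ S, (E S : MonoidAlgebra K G) = 1 + ∑ i ∈ S, tt K z a b i.val :=
    fun S => rfl
  refine ⟨E {⟨0, hn⟩}, ?_, ?_⟩
  · rw [hEval, Finset.sum_singleton, tt, ho]
    simp
  set hu : (MonoidAlgebra K G)ˣ := E {⟨0, hn⟩} with hhu
  have huval : (hu : MonoidAlgebra K G) = 1 + o b * (1 + o z) := by
    rw [hEval, Finset.sum_singleton, tt, ho]
    simp
  -- coercions of powers of A
  have hApow : ∀ i : ℕ, ((A ^ i : (MonoidAlgebra K G)ˣ) : MonoidAlgebra K G) = o (a ^ i) := by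
    intro i
    rw [hA, ← map_pow, MonoidHom.coe_toHomUnits, ho]
  have hApowinv : ∀ i : ℕ,
      (((A ^ i)⁻¹ : (MonoidAlgebra K G)ˣ) : MonoidAlgebra K G) = o ((a ^ i)⁻¹) := by
    intro i
    rw [hA, ← map_pow, ← map_inv, MonoidHom.coe_toHomUnits, ho]
  -- the values of the conjugates
  have hval : ∀ i : ℕ,
      (((A ^ i)⁻¹ * hu * A ^ i : (MonoidAlgebra K G)ˣ) : MonoidAlgebra K G)
        = 1 + tt K z a b i := by
    intro i
    rw [Units.val_mul, Units.val_mul, hApow, hApowinv, huval, ho, tt]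
    exact conj_one_add hzc (a ^ i) b
  -- each conjugate with i < n is E of a singleton
  have hceq : ∀ i (hi : i < n), (A ^ i)⁻¹ * hu * A ^ i = E {⟨i, hi⟩} := by
    intro i hi
    refine Units.ext ?_
    rw [hval i, hEval, Finset.sum_singleton]
  clear_value o A E hu
  -- the subgroup X
  set s : Set (MonoidAlgebra K G)ˣ := {x | ∃ i < n, x = (A ^ i)⁻¹ * hu * A ^ i} with hs
  set X := Subgroup.closure s with hX
  have hEX : ∀ S : Finset (Fin n), E S ∈ X := by
    intro S
    induction S using Finset.induction_on with
    | empty =>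
      have h1 : E ∅ = 1 := Units.ext (by rw [hEval]; simp)
      rw [h1]; exact one_mem _
    | @insert j S hjS ih =>
      have h1 : E (insert j S) = E {j} * E S := by
        rw [hE, eu_mul]
        congr 1
        ext x
        simp only [Finset.mem_symmDiff, Finset.mem_singleton, Finset.mem_insert]
        constructor
        · rintro (rfl | hx)
          · exact Or.inl ⟨rfl, hjS⟩
          · exact Or.inr ⟨hx, fun hxj => hjS (hxj ▸ hx)⟩
        · rintro (⟨rfl, _⟩ | ⟨hx, _⟩)
          · exact Or.inl rfl
          · exact Or.inr hx
      rw [h1]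
      refine mul_mem (Subgroup.subset_closure ?_) ih
      exact ⟨j.val, j.isLt, (hceq j.val j.isLt).symm⟩
  have hXY : ∀ x ∈ X, ∃ S : Finset (Fin n), x = E S := by
    have hone : (1 : (MonoidAlgebra K G)ˣ) = E ∅ := (Units.ext (by rw [hEval]; simp)).symm
    set Y : Subgroup (MonoidAlgebra K G)ˣ :=
      { carrier := {x | ∃ S : Finset (Fin n), x = E S}
        one_mem' := ⟨∅, hone⟩
        mul_mem' := by
          rintro x y ⟨S, rfl⟩ ⟨T, rfl⟩
          exact ⟨S ∆ T, by rw [hE, eu_mul]⟩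
        inv_mem' := by
          rintro x ⟨S, rfl⟩
          refine ⟨S, ?_⟩
          have h2 : E S * E S = 1 := by
            rw [hE, eu_mul, symmDiff_self, Finset.bot_eq_empty, ← hE, ← hone]
          exact inv_eq_iff_mul_eq_one.mpr h2 } with hY
    have hle : X ≤ Y := by
      rw [hX, Subgroup.closure_le]
      rintro x ⟨i, hi, rfl⟩
      exact ⟨{⟨i, hi⟩}, hceq i hi⟩
    exact fun x hx => hle hx
  have hEinj : Function.Injective E := by
    intro S T h
    have h1 : (E S : MonoidAlgebra K G) = (E T : MonoidAlgebra K G) := by rw [h]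
    rw [hEval, hEval] at h1
    exact sum_tt_inj hdist hnez (add_left_cancel h1)
  -- periodicity
  have hper : (A ^ n)⁻¹ * hu * A ^ n = hu := by
    refine Units.ext ?_
    rw [hval n, huval, tt]
    have hb : (a ^ n)⁻¹ * b * a ^ n = b := by
      rw [mul_assoc, ← hab.eq, ← mul_assoc, inv_mul_cancel, one_mul]
    rw [hb, ho]
  have hconj : ∀ i < n, A⁻¹ * ((A ^ i)⁻¹ * hu * A ^ i) * A
      = (A ^ ((i + 1) % n))⁻¹ * hu * A ^ ((i + 1) % n) := by
    intro i hi
    have hstep : A⁻¹ * ((A ^ i)⁻¹ * hu * A ^ i) * A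
        = (A ^ (i + 1))⁻¹ * hu * A ^ (i + 1) := by group
    rw [hstep]
    rcases Nat.lt_or_ge (i + 1) n with hlt | hge
    · rw [Nat.mod_eq_of_lt hlt]
    · have heq : i + 1 = n := by omega
      rw [heq, Nat.mod_self, hper, pow_zero]
      simp
  refine ⟨?_, ?_, ?_, ?_, hconj, ?_⟩
  -- cardinality
  · have hcar : (X : Set (MonoidAlgebra K G)ˣ) = Set.range E := by
      ext x
      constructor
      · intro hx
        obtain ⟨S, rfl⟩ := hXY x hx
        exact ⟨S, rfl⟩
      · rintro ⟨S, rfl⟩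
        exact hEX S
    calc Nat.card X = Nat.card (Set.range E) := by rw [← hcar]; rfl
      _ = Nat.card (Finset (Fin n)) := Nat.card_range_of_injective hEinj
      _ = 2 ^ n := by
          rw [Nat.card_eq_fintype_card, Fintype.card_finset, Fintype.card_fin]
  -- squares
  · intro x hx
    obtain ⟨S, rfl⟩ := hXY x hx
    rw [hE, eu_mul, symmDiff_self, Finset.bot_eq_empty]
    exact Units.ext (by rw [← hE, hEval]; simp)
  -- commutativity
  · intro x hx y hy
    obtain ⟨S, rfl⟩ := hXY x hx
    obtain ⟨T, rfl⟩ := hXY y hy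
    rw [hE, eu_mul, eu_mul, symmDiff_comm]
  -- normalized by A
  · have hsub : X ≤ X.comap (MulAut.conj A⁻¹).toMonoidHom := by
      rw [hX, Subgroup.closure_le]
      rintro x ⟨i, hi, rfl⟩
      simp only [SetLike.mem_coe, Subgroup.mem_comap,
        MulEquiv.coe_toMonoidHom, MulAut.conj_apply, inv_inv]
      rw [← hX, hconj i hi]
      exact Subgroup.subset_closure ⟨(i + 1) % n, Nat.mod_lt _ hn, rfl⟩
    intro x hx
    have h2 := hsub hx
    rw [Subgroup.mem_comap] at h2
    simpa only [MulEquiv.coe_toMonoidHom, MulAut.conj_apply, inv_inv] using h2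
  -- centralized by A^n
  · intro x hx
    obtain ⟨S, rfl⟩ := hXY x hx
    refine Units.ext ?_
    rw [Units.val_mul, Units.val_mul, hApow, hEval]
    have hcomm : ∀ i : Fin n, Commute (o (a ^ n)) (tt K z a b i.val) := by
      intro i
      have hG : Commute (a ^ n) ((a ^ (i:ℕ))⁻¹ * b * a ^ (i:ℕ)) :=
        (((Commute.pow_pow_self a n i).inv_right).mul_right hab).mul_right
          (Commute.pow_pow_self a n i)
      rw [tt, ho]
      exact comm_tt hzc _ _ hG
    exact ((Commute.one_right _).add_right (Commute.sum_right _ _ _ fun i _ => hcomm i)).eq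
end

section
/- Let $U$ be a group, $a \in U$ an element of finite order, $n$ a positive integer, and $x_0, x_1, \dots, x_{n-1} \in U$. Let $X$ be the subgroup generated by $x_0, \dots, x_{n-1}$, and assume: the map $(\mathbb{Z}/2\mathbb{Z})^n \to X$, $(e_0,\dots,e_{n-1}) \mapsto x_0^{e_0} \cdots x_{n-1}^{e_{n-1}}$, is a group isomorphism (so $X$ is elementary abelian of order $2^n$ with basis $x_0,\dots,x_{n-1}$); $a^{-1} x_i a = x_{i+1 \bmod n}$ for all $0 \leq i < n$; $a^{n}$ commutes with every element of $X$; and $X \cap \langle a^{n} \rangle = \{1\}$. Then $\langle a^{n} \rangle$ is a central (hence normal) subgroup of the subgroup $H = \langle X, a \rangle$, and the quotient $H / \langle a^{n} \rangle$ is isomorphic to the wreath product $C_2 \wr C_n$, i.e., to the semidirect product $(\mathbb{Z}/n\mathbb{Z} \to \mathbb{Z}/2\mathbb{Z}) \rtimes \mathbb{Z}/n\mathbb{Z}$, where $\mathbb{Z}/n\mathbb{Z}$ acts on functions by translating the argument. -/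
/-- The translation action of a group `A` on functions `A → C₂`. -/
def wreathMap (A : Type*) [Group A] : A →* MulAut (A → Multiplicative (ZMod 2)) where
  toFun a :=
    { toFun := fun f x => f (a⁻¹ * x)
      invFun := fun f x => f (a * x)
      left_inv := fun f => by funext x; simp
      right_inv := fun f => by funext x; simp
      map_mul' := fun f g => rfl }
  map_one' := by ext f x; simp
  map_mul' a b := by ext f x; simp [mul_assoc]

/-- The wreath product `C₂ ≀ A` of a group of order 2 with the group `A`. -/
abbrev WreathC2 (A : Type*) [Group A] : Type _ :=
  (A → Multiplicative (ZMod 2)) ⋊[wreathMap A] A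

open Multiplicative

private lemma prod_ofFn_eq_single {M : Type*} [Monoid M] :
    ∀ {n : ℕ} (y : Fin n → M) (i : Fin n), (∀ j, j ≠ i → y j = 1) →
      (List.ofFn y).prod = y i := by
  intro n
  induction n with
  | zero => exact fun y i _ => i.elim0
  | succ m ih =>
    intro y i hy
    rw [List.ofFn_succ, List.prod_cons]
    rcases Fin.eq_zero_or_eq_succ i with rfl | ⟨j, rfl⟩
    · have h1 : (List.ofFn fun k : Fin m => y k.succ).prod = 1 := by
        apply List.prod_eq_one
        intro z hz
        obtain ⟨k, rfl⟩ := List.mem_ofFn.mp hz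
        exact hy _ (Fin.succ_ne_zero k)
      rw [h1, mul_one]
    · rw [hy 0 (Fin.succ_ne_zero j).symm, one_mul]
      exact ih (fun k => y k.succ) j fun k hk =>
        hy _ (fun h => hk (Fin.succ_injective _ h))

private lemma zmod2_eq_pow (g : Multiplicative (ZMod 2)) :
    g = (ofAdd (1 : ZMod 2)) ^ (Multiplicative.toAdd g).val := by
  revert g; decide

private lemma pi_hom_ext {n : ℕ} {M : Type*} [Monoid M]
    (h1 h2 : (Fin n → Multiplicative (ZMod 2)) →* M)
    (h : ∀ i, h1 (Pi.mulSingle i (ofAdd (1 : ZMod 2))) = h2 (Pi.mulSingle i (ofAdd (1 : ZMod 2)))) :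
    ∀ f, h1 f = h2 f := by
  intro f
  have hf : f = (List.ofFn fun i =>
      Pi.mulSingle i (ofAdd (1 : ZMod 2)) ^ (Multiplicative.toAdd (f i)).val).prod := by
    funext j
    rw [Pi.list_prod_apply, List.map_ofFn]
    refine ((prod_ofFn_eq_single _ j ?_).trans ?_).symm
    · intro k hk
      simp [Function.comp, Pi.mulSingle_eq_of_ne (Ne.symm hk)]
    · simp only [Function.comp_apply, Pi.pow_apply, Pi.mulSingle_eq_same]
      exact (zmod2_eq_pow (f j)).symm
  rw [hf, map_list_prod, map_list_prod, List.map_ofFn, List.map_ofFn]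
  refine congrArg List.prod (congrArg List.ofFn (funext fun i => ?_))
  simp only [Function.comp_apply, map_pow, h i]

/-- If `X = ⟨x₀, …, x_{n-1}⟩` is elementary abelian of order `2^n` with basis
`x₀, …, x_{n-1}`, conjugation by `a` permutes the `xᵢ` cyclically, `aⁿ`
centralizes `X` and `X ∩ ⟨aⁿ⟩ = 1`, then `⟨aⁿ⟩` is central in `H = ⟨X, a⟩` and
`H / ⟨aⁿ⟩ ≅ C₂ ≀ Cₙ`. -/
theorem quotient_iso_wreath_product
    (U : Type*) [Group U] (a : U) (ha : IsOfFinOrder a)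
    (n : ℕ) (hn : 0 < n) (x : ℕ → U) :
    letI X := Subgroup.closure {y | ∃ i < n, y = x i}
    ∀ (ψ : (Fin n → Multiplicative (ZMod 2)) ≃* X),
      (∀ e : Fin n → Multiplicative (ZMod 2),
        ((ψ e : X) : U) = (List.ofFn fun i : Fin n =>
          x i ^ (Multiplicative.toAdd (e i)).val).prod) →
      (∀ i < n, a⁻¹ * x i * a = x ((i + 1) % n)) →
      (∀ u ∈ X, Commute (a ^ n) u) →
      (X ⊓ Subgroup.zpowers (a ^ n) = ⊥) →
      letI H := Subgroup.closure ({a} ∪ {y | ∃ i < n, y = x i})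
      letI N := Subgroup.zpowers (a ^ n)
      (∀ g ∈ H, ∀ m ∈ N, Commute g m) ∧ N ≤ H ∧
        ∃ hN : (N.subgroupOf H).Normal,
          letI := hN
          Nonempty (H ⧸ N.subgroupOf H ≃* WreathC2 (Multiplicative (ZMod n))) := by
  set X : Subgroup U := Subgroup.closure {y | ∃ i < n, y = x i} with hXdef
  set H : Subgroup U := Subgroup.closure ({a} ∪ {y | ∃ i < n, y = x i}) with hHdef
  set N : Subgroup U := Subgroup.zpowers (a ^ n) with hNdef
  intro ψ hψ hconj hcommX hinter
  haveI : NeZero n := ⟨hn.ne'⟩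
  -- basic memberships
  have hxX : ∀ i, i < n → x i ∈ X := fun i hi => Subgroup.subset_closure ⟨i, hi, rfl⟩
  have hXH : X ≤ H := Subgroup.closure_mono Set.subset_union_right
  have haH : a ∈ H := Subgroup.subset_closure (Set.mem_union_left _ rfl)
  have hanH : a ^ n ∈ H := pow_mem haH n
  have hNH : N ≤ H := Subgroup.zpowers_le.mpr hanH
  -- commuting
  have hcommH : ∀ g ∈ H, Commute g (a ^ n) := by
    intro g hg
    induction hg using Subgroup.closure_induction with
    | mem y hy =>
      rcases hy with rfl | ⟨i, hi, rfl⟩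
      · exact (Commute.refl y).pow_right n
      · exact (hcommX _ (hxX i hi)).symm
    | one => exact Commute.one_left _
    | mul y z _ _ hy hz => exact hy.mul_left hz
    | inv y _ hy => exact hy.inv_left
  have hcommN : ∀ g ∈ H, ∀ m ∈ N, Commute g m := by
    intro g hg m hm
    obtain ⟨t, rfl⟩ := Subgroup.mem_zpowers_iff.mp hm
    exact (hcommH g hg).zpow_right t
  -- normality
  have hN : (N.subgroupOf H).Normal := by
    constructor
    intro m hm h
    rw [Subgroup.mem_subgroupOf] at hm ⊢
    have hc : (h : U) * m * (h : U)⁻¹ = (m : U) := by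
      rw [(hcommN h h.2 m hm).eq, mul_assoc, mul_inv_cancel, mul_one]
    show ((h : U) * m * (h : U)⁻¹ ∈ N)
    rw [hc]; exact hm
  haveI := hN
  refine ⟨hcommN, hNH, hN, ?_⟩
  set Q := H ⧸ N.subgroupOf H with hQdef
  set q : H →* Q := QuotientGroup.mk' (N.subgroupOf H) with hqdef
  have hq1 : ∀ u : H, q u = 1 ↔ (u : U) ∈ N := by
    intro u
    rw [hqdef]
    rw [QuotientGroup.mk'_apply, QuotientGroup.eq_one_iff, Subgroup.mem_subgroupOf]
  set A : Q := q ⟨a, haH⟩ with hAdef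
  have hAn : A ^ n = 1 := by
    rw [hAdef, ← map_pow]
    exact (hq1 _).mpr (Subgroup.mem_zpowers _)
  -- the basis elements
  have hsingle : ∀ i : Fin n,
      ((ψ (Pi.mulSingle i (Multiplicative.ofAdd (1 : ZMod 2))) : X) : U) = x i := by
    intro i
    rw [hψ]
    rw [prod_ofFn_eq_single _ i ?_]
    · simp [ZMod.val_one]
    · intro j hj
      rw [Pi.mulSingle_eq_of_ne hj]
      simp
  have hxinj : ∀ i j : Fin n, x i = x j → i = j := by
    intro i j hij
    by_contra hne
    have h1 : ψ (Pi.mulSingle i (Multiplicative.ofAdd (1 : ZMod 2)))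
        = ψ (Pi.mulSingle j (Multiplicative.ofAdd (1 : ZMod 2))) := by
      apply Subtype.ext
      rw [hsingle, hsingle, hij]
    have h2 := congrFun (ψ.injective h1) i
    rw [Pi.mulSingle_eq_same, Pi.mulSingle_eq_of_ne hne] at h2
    exact (by decide : (Multiplicative.ofAdd (1 : ZMod 2)) ≠ 1) h2
  -- cyclic shift on Fin n
  set pred : Fin n → Fin n := fun j => ⟨(j + (n - 1)) % n, Nat.mod_lt _ hn⟩ with hpreddef
  set succ' : Fin n → Fin n := fun i => ⟨((i : ℕ) + 1) % n, Nat.mod_lt _ hn⟩ with hsuccdef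
  have hps : ∀ i, pred (succ' i) = i := by
    intro i
    apply Fin.ext
    show ((((i : ℕ) + 1) % n) + (n - 1)) % n = (i : ℕ)
    rw [Nat.mod_add_mod]
    have : (i : ℕ) + 1 + (n - 1) = (i : ℕ) + n := by omega
    rw [this, Nat.add_mod_right, Nat.mod_eq_of_lt i.isLt]
  have hsuccinj : ∀ i j, succ' i = succ' j → i = j := by
    intro i j hij
    rw [← hps i, ← hps j, hij]
  -- conjugation formula on X
  have hsp : ∀ j, succ' (pred j) = j := by
    intro j
    apply Fin.ext
    show (((j : ℕ) + (n - 1)) % n + 1) % n = (j : ℕ)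
    rw [Nat.mod_add_mod]
    have : (j : ℕ) + (n - 1) + 1 = (j : ℕ) + n := by omega
    rw [this, Nat.add_mod_right, Nat.mod_eq_of_lt j.isLt]
  have hP : ∀ i : Fin n, (fun j =>
        (Pi.mulSingle i (Multiplicative.ofAdd (1 : ZMod 2)) :
          Fin n → Multiplicative (ZMod 2)) (pred j))
      = Pi.mulSingle (succ' i) (Multiplicative.ofAdd (1 : ZMod 2)) := by
    intro i; funext j
    by_cases hj : j = succ' i
    · subst hj; rw [hps, Pi.mulSingle_eq_same, Pi.mulSingle_eq_same]
    · rw [Pi.mulSingle_eq_of_ne hj, Pi.mulSingle_eq_of_ne]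
      intro hc
      exact hj (by rw [← hc, hsp j])
  have hconjψ : ∀ e : Fin n → Multiplicative (ZMod 2),
      a⁻¹ * ((ψ e : X) : U) * a = ((ψ (fun j => e (pred j)) : X) : U) := by
    have key := pi_hom_ext
      ((MulAut.conj a⁻¹).toMonoidHom.comp (X.subtype.comp ψ.toMonoidHom))
      ((X.subtype.comp ψ.toMonoidHom).comp
        { toFun := fun e j => e (pred j), map_one' := rfl, map_mul' := fun _ _ => rfl })
      ?_
    · intro e
      have h := key e
      simp only [MonoidHom.comp_apply, MulEquiv.coe_toMonoidHom, MulAut.conj_apply,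
        Subgroup.coe_subtype, MonoidHom.coe_mk, OneHom.coe_mk, inv_inv] at h
      exact h
    · intro i
      simp only [MonoidHom.comp_apply, MulEquiv.coe_toMonoidHom, MulAut.conj_apply,
        Subgroup.coe_subtype, MonoidHom.coe_mk, OneHom.coe_mk, inv_inv]
      rw [hsingle, hP i, hsingle]
      exact hconj i i.isLt
  -- the two component homomorphisms into Q
  set c : Fin n → Multiplicative (ZMod n) :=
    fun j => Multiplicative.ofAdd ((j : ℕ) : ZMod n) with hcdef
  set restr : (Multiplicative (ZMod n) → Multiplicative (ZMod 2)) →*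
      (Fin n → Multiplicative (ZMod 2)) :=
    { toFun := fun f j => f (c j), map_one' := rfl, map_mul' := fun _ _ => rfl }
    with hrestrdef
  set φ₁ : (Multiplicative (ZMod n) → Multiplicative (ZMod 2)) →* Q :=
    q.comp ((Subgroup.inclusion hXH).comp (ψ.toMonoidHom.comp restr)) with hphi1def
  have hφ₁ : ∀ f, φ₁ f = q ((Subgroup.inclusion hXH) (ψ (restr f))) := fun f => rfl
  have keypow : ∀ g : Q, g ^ n = 1 → ∀ k : ℕ, g ^ (k % n) = g ^ k := by
    intro g hg k
    conv_rhs => rw [← Nat.div_add_mod k n]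
    rw [pow_add, pow_mul, hg, one_pow, one_mul]
  have hAin : A⁻¹ ^ n = 1 := by rw [inv_pow, hAn, inv_one]
  set φ₂ : Multiplicative (ZMod n) →* Q :=
    { toFun := fun b => A⁻¹ ^ (Multiplicative.toAdd b).val
      map_one' := by simp
      map_mul' := by
        intro b c'
        show A⁻¹ ^ (Multiplicative.toAdd (b * c')).val = _
        rw [toAdd_mul, ZMod.val_add, keypow _ hAin, pow_add] } with hphi2def
  have hφ₂gen : φ₂ (Multiplicative.ofAdd (1 : ZMod n)) = A⁻¹ := by
    show A⁻¹ ^ (Multiplicative.toAdd (Multiplicative.ofAdd (1 : ZMod n))).val = A⁻¹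
    rcases eq_or_lt_of_le (show 1 ≤ n from hn) with h1 | h2
    · have hA1 : A = 1 := by
        have h := hAn
        rw [← h1, pow_one] at h
        exact h
      simp [hA1]
    · haveI : Fact (1 < n) := ⟨h2⟩
      rw [toAdd_ofAdd, ZMod.val_one, pow_one]
  have hcast : ∀ j : Fin n, (((pred j : Fin n) : ℕ) : ZMod n) = ((j : ℕ) : ZMod n) - 1 := by
    intro j
    have h0 : ((pred j : Fin n) : ℕ) = ((j : ℕ) + (n - 1)) % n := rfl
    rw [h0, ZMod.natCast_mod, Nat.cast_add, Nat.cast_sub hn, Nat.cast_one, ZMod.natCast_self]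
    ring
  have hbase : ∀ f, φ₂ (Multiplicative.ofAdd (1 : ZMod n)) * φ₁ f *
      (φ₂ (Multiplicative.ofAdd (1 : ZMod n)))⁻¹
      = φ₁ (wreathMap (Multiplicative (ZMod n)) (Multiplicative.ofAdd (1 : ZMod n)) f) := by
    intro f
    rw [hφ₂gen, inv_inv, hφ₁, hφ₁, hAdef, ← map_inv, ← map_mul, ← map_mul]
    apply congrArg q
    apply Subtype.ext
    simp only [MulMemClass.coe_mul, InvMemClass.coe_inv, Subgroup.coe_inclusion]
    rw [hconjψ]
    apply congrArg (fun z => ((ψ z : X) : U))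
    funext j
    show f (c (pred j)) = f ((Multiplicative.ofAdd (1 : ZMod n))⁻¹ * c j)
    apply congrArg f
    show Multiplicative.ofAdd (((pred j : Fin n) : ℕ) : ZMod n) = _
    rw [hcast j, ← ofAdd_neg, ← ofAdd_add]
    exact congrArg _ (by ring)
  have hcompat' : ∀ (b : Multiplicative (ZMod n)) f,
      φ₂ b * φ₁ f * (φ₂ b)⁻¹
        = φ₁ (wreathMap (Multiplicative (ZMod n)) b f) := by
    have hmul : ∀ b b',
        (∀ f, φ₂ b * φ₁ f * (φ₂ b)⁻¹ = φ₁ (wreathMap (Multiplicative (ZMod n)) b f)) →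
        (∀ f, φ₂ b' * φ₁ f * (φ₂ b')⁻¹ = φ₁ (wreathMap (Multiplicative (ZMod n)) b' f)) →
        ∀ f, φ₂ (b * b') * φ₁ f * (φ₂ (b * b'))⁻¹
          = φ₁ (wreathMap (Multiplicative (ZMod n)) (b * b') f) := by
      intro b b' hb hb' f
      rw [map_mul, mul_inv_rev]
      calc φ₂ b * φ₂ b' * φ₁ f * ((φ₂ b')⁻¹ * (φ₂ b)⁻¹)
          = φ₂ b * (φ₂ b' * φ₁ f * (φ₂ b')⁻¹) * (φ₂ b)⁻¹ := by group
        _ = φ₂ b * φ₁ (wreathMap (Multiplicative (ZMod n)) b' f) * (φ₂ b)⁻¹ := by rw [hb' f]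
        _ = φ₁ (wreathMap (Multiplicative (ZMod n)) b
              (wreathMap (Multiplicative (ZMod n)) b' f)) := hb _
        _ = φ₁ (wreathMap (Multiplicative (ZMod n)) (b * b') f) := by rw [map_mul]; rfl
    have hpow : ∀ k : ℕ, ∀ f,
        φ₂ ((Multiplicative.ofAdd (1 : ZMod n)) ^ k) * φ₁ f *
          (φ₂ ((Multiplicative.ofAdd (1 : ZMod n)) ^ k))⁻¹
        = φ₁ (wreathMap (Multiplicative (ZMod n))
            ((Multiplicative.ofAdd (1 : ZMod n)) ^ k) f) := by
      intro k
      induction k with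
      | zero => intro f; simp
      | succ m ih =>
        intro f
        rw [pow_succ]
        exact hmul _ _ ih hbase f
    intro b f
    have hb : b = (Multiplicative.ofAdd (1 : ZMod n)) ^ (Multiplicative.toAdd b).val := by
      have h1 : Multiplicative.toAdd ((Multiplicative.ofAdd (1 : ZMod n))
          ^ (Multiplicative.toAdd b).val) = ((Multiplicative.toAdd b).val : ZMod n) := by
        rw [toAdd_pow, toAdd_ofAdd, nsmul_eq_mul, mul_one]
      have h2 : ((Multiplicative.toAdd b).val : ZMod n) = Multiplicative.toAdd b := by
        rw [ZMod.natCast_val, ZMod.cast_id]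
      apply Multiplicative.toAdd.injective
      rw [h1, h2]
    rw [hb]
    exact hpow _ f
  have hcompat : ∀ b, φ₁.comp ((wreathMap (Multiplicative (ZMod n)) b).toMonoidHom)
      = (MulAut.conj (φ₂ b)).toMonoidHom.comp φ₁ := by
    intro b
    ext f
    simp only [MonoidHom.comp_apply, MulEquiv.coe_toMonoidHom, MulAut.conj_apply]
    exact (hcompat' b f).symm
  set Φ : WreathC2 (Multiplicative (ZMod n)) →* Q :=
    SemidirectProduct.lift φ₁ φ₂ hcompat with hPhidef
  have hΦ : ∀ w : WreathC2 (Multiplicative (ZMod n)),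
      Φ w = φ₁ w.left * φ₂ w.right := fun w => rfl
  -- conjugating x 0 by powers of a
  have hx0 : ∀ m : ℕ, a⁻¹ ^ m * x 0 * a ^ m = x (m % n) := by
    intro m
    induction m with
    | zero => simp [Nat.mod_eq_of_lt hn]
    | succ m ih =>
      rw [pow_succ', pow_succ]
      calc a⁻¹ * a⁻¹ ^ m * x 0 * (a ^ m * a)
          = a⁻¹ * (a⁻¹ ^ m * x 0 * a ^ m) * a := by group
        _ = a⁻¹ * x (m % n) * a := by rw [ih]
        _ = x ((m % n + 1) % n) := hconj _ (Nat.mod_lt _ hn)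
        _ = x ((m + 1) % n) := congrArg x (Nat.mod_add_mod m n 1)
  have hXcomm : ∀ u v : X, (u : U) * v = (v : U) * u := by
    intro u v
    rw [← MulMemClass.coe_mul, ← MulMemClass.coe_mul]
    obtain ⟨e, rfl⟩ := ψ.surjective u
    obtain ⟨e', rfl⟩ := ψ.surjective v
    rw [← map_mul, ← map_mul, mul_comm]
  -- injectivity
  have hinj : Function.Injective Φ := by
    apply (injective_iff_map_eq_one Φ).mpr
    intro w hw
    obtain ⟨f, b⟩ := w
    replace hw : φ₁ f * φ₂ b = 1 := hw
    have hk : (Multiplicative.toAdd b).val < n := ZMod.val_lt _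
    have hmemN : ((ψ (restr f) : X) : U) * a⁻¹ ^ (Multiplicative.toAdd b).val ∈ N := by
      have h1 : φ₁ f * φ₂ b
          = q ((Subgroup.inclusion hXH) (ψ (restr f)) *
              (⟨a, haH⟩ : H)⁻¹ ^ (Multiplicative.toAdd b).val) := by
        rw [map_mul, map_pow, map_inv]
        rfl
      have h2 := (hq1 _).mp (by rw [← h1]; exact hw)
      simpa only [MulMemClass.coe_mul, SubmonoidClass.coe_pow, InvMemClass.coe_inv,
        Subgroup.coe_inclusion] using h2
    obtain ⟨t, ht⟩ := Subgroup.mem_zpowers_iff.mp hmemN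
    have hu : ((ψ (restr f) : X) : U)
        = (a ^ n) ^ t * a ^ (Multiplicative.toAdd b).val := by
      have h3 : ((ψ (restr f) : X) : U) * a⁻¹ ^ (Multiplicative.toAdd b).val
          * a ^ (Multiplicative.toAdd b).val
          = (a ^ n) ^ t * a ^ (Multiplicative.toAdd b).val := by rw [ht]
      rw [inv_pow] at h3
      rw [← h3]
      group
    have hcomm0 : ((ψ (restr f) : X) : U) * x 0 = x 0 * ((ψ (restr f) : X) : U) :=
      hXcomm _ ⟨x 0, hxX 0 hn⟩
    have hcn : Commute ((a ^ n) ^ t) (x 0) := ((hcommX _ (hxX 0 hn))).zpow_left t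
    have e0 : ((a ^ n) ^ t * a ^ (Multiplicative.toAdd b).val)⁻¹ * x 0
        * ((a ^ n) ^ t * a ^ (Multiplicative.toAdd b).val) = x 0 := by
      rw [← hu]
      calc (((ψ (restr f) : X) : U))⁻¹ * x 0 * ((ψ (restr f) : X) : U)
          = (((ψ (restr f) : X) : U))⁻¹ * (x 0 * ((ψ (restr f) : X) : U)) := by group
        _ = (((ψ (restr f) : X) : U))⁻¹ * (((ψ (restr f) : X) : U) * x 0) := by rw [hcomm0]
        _ = x 0 := by group
    have e1 : ((a ^ n) ^ t * a ^ (Multiplicative.toAdd b).val)⁻¹ * x 0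
        * ((a ^ n) ^ t * a ^ (Multiplicative.toAdd b).val)
        = x ((Multiplicative.toAdd b).val % n) := by
      have hinner : ((a ^ n) ^ t)⁻¹ * x 0 * (a ^ n) ^ t = x 0 := by
        calc ((a ^ n) ^ t)⁻¹ * x 0 * (a ^ n) ^ t
            = ((a ^ n) ^ t)⁻¹ * (x 0 * (a ^ n) ^ t) := by group
          _ = ((a ^ n) ^ t)⁻¹ * ((a ^ n) ^ t * x 0) := by rw [hcn.eq]
          _ = x 0 := by group
      calc ((a ^ n) ^ t * a ^ (Multiplicative.toAdd b).val)⁻¹ * x 0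
          * ((a ^ n) ^ t * a ^ (Multiplicative.toAdd b).val)
          = a⁻¹ ^ (Multiplicative.toAdd b).val * (((a ^ n) ^ t)⁻¹ * x 0 * (a ^ n) ^ t)
            * a ^ (Multiplicative.toAdd b).val := by rw [inv_pow]; group
        _ = a⁻¹ ^ (Multiplicative.toAdd b).val * x 0 * a ^ (Multiplicative.toAdd b).val := by
            rw [hinner]
        _ = x ((Multiplicative.toAdd b).val % n) := hx0 _
    have hxk : x ((Multiplicative.toAdd b).val) = x 0 := by
      have := e1.symm.trans e0
      rwa [Nat.mod_eq_of_lt hk] at this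
    have hk0 : (Multiplicative.toAdd b).val = 0 := by
      have := hxinj ⟨(Multiplicative.toAdd b).val, hk⟩ ⟨0, hn⟩ hxk
      exact congrArg Fin.val this
    have hb1 : b = 1 := by
      apply Multiplicative.toAdd.injective
      have h2 : ((Multiplicative.toAdd b).val : ZMod n) = Multiplicative.toAdd b := by
        rw [ZMod.natCast_val, ZMod.cast_id]
      rw [← h2, hk0]
      simp
    have hψN : ((ψ (restr f) : X) : U) ∈ N := by
      rw [hu, hk0, pow_zero, mul_one]
      exact Subgroup.mem_zpowers_iff.mpr ⟨t, rfl⟩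
    have hψbot : ((ψ (restr f) : X) : U) ∈ X ⊓ N := ⟨(ψ (restr f)).2, hψN⟩
    rw [hinter, Subgroup.mem_bot] at hψbot
    have hψ1 : ψ (restr f) = 1 := Subtype.ext hψbot
    have hrf : restr f = 1 := ψ.injective (by rw [hψ1, map_one])
    have hf : f = 1 := by
      funext z
      have hzlt : (Multiplicative.toAdd z).val < n := ZMod.val_lt _
      have h5 := congrFun hrf ⟨(Multiplicative.toAdd z).val, hzlt⟩
      have h6 : c ⟨(Multiplicative.toAdd z).val, hzlt⟩ = z := by
        show Multiplicative.ofAdd (((Multiplicative.toAdd z).val : ℕ) : ZMod n) = z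
        rw [ZMod.natCast_val, ZMod.cast_id]
        rfl
      rw [show restr f ⟨(Multiplicative.toAdd z).val, hzlt⟩
        = f (c ⟨(Multiplicative.toAdd z).val, hzlt⟩) from rfl, h6] at h5
      exact h5
    rw [hf, hb1]
    rfl
  -- surjectivity
  have hrange : ∀ (u : U) (hu : u ∈ H), q ⟨u, hu⟩ ∈ Φ.range := by
    intro u hu
    induction hu using Subgroup.closure_induction with
    | mem y hy =>
      rcases hy with rfl | ⟨i, hi, rfl⟩
      · refine ⟨(SemidirectProduct.inr (Multiplicative.ofAdd (1 : ZMod n)))⁻¹, ?_⟩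
        rw [hPhidef, map_inv, SemidirectProduct.lift_inr, hφ₂gen, inv_inv, hAdef]
      · set e := ψ.symm ⟨x i, hxX i hi⟩ with hedef
        refine ⟨SemidirectProduct.inl
          (fun z => e ⟨(Multiplicative.toAdd z).val, ZMod.val_lt _⟩), ?_⟩
        rw [hPhidef, SemidirectProduct.lift_inl, hφ₁]
        refine congrArg q (Subtype.ext ?_)
        rw [Subgroup.coe_inclusion]
        have hre : restr (fun z => e ⟨(Multiplicative.toAdd z).val, ZMod.val_lt _⟩) = e := by
          funext j
          show e ⟨(Multiplicative.toAdd (c j)).val, ZMod.val_lt _⟩ = e j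
          congr 1
          exact Fin.ext (ZMod.val_cast_of_lt j.isLt)
        rw [hre, hedef, MulEquiv.apply_symm_apply]
    | one => exact ⟨1, (map_one Φ).trans (map_one q).symm⟩
    | mul u v hu hv ihu ihv =>
      obtain ⟨wu, hwu⟩ := ihu
      obtain ⟨wv, hwv⟩ := ihv
      exact ⟨wu * wv, by rw [map_mul, hwu, hwv, ← map_mul]; exact congrArg q (Subtype.ext (by simp))⟩
    | inv u hu ihu =>
      obtain ⟨wu, hwu⟩ := ihu
      exact ⟨wu⁻¹, by rw [map_inv, hwu, ← map_inv]; exact congrArg q (Subtype.ext (by simp))⟩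
  have hsurj : Function.Surjective Φ := by
    intro qq
    refine QuotientGroup.induction_on qq ?_
    intro h
    obtain ⟨w, hw⟩ := hrange (h : U) h.2
    exact ⟨w, hw⟩
  exact ⟨(MulEquiv.ofBijective Φ ⟨hinj, hsurj⟩).symm⟩
end

section
/- Let $K$ be a field of characteristic $2$ and let $G$ be a finite non-abelian $2$-group whose derived subgroup $G'$ is cyclic, and suppose there exists an element $z \in Z(G) \setminus G'$ with $z^2 = 1$ and $z \neq 1$. Then the wreath product $C_2 \wr C_{|G'|}$ of a cyclic group of order $2$ with a cyclic group of order $|G'|$ is involved in the unit group $(KG)^{\times}$ of the group algebra $KG$; that is, there exist a subgroup $H$ of $(KG)^{\times}$ and a normal subgroup $N$ of $H$ with $H/N \cong C_2 \wr C_{|G'|}$. -/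
/-- `wT s m = 1 + s + ... + s^(m-1)`. -/
def wT (s : ℕ) : ℕ → ℕ
  | 0 => 0
  | m + 1 => s * wT s m + 1

lemma wT_add (s a b : ℕ) : wT s (a + b) = wT s b + s ^ b * wT s a := by
  induction b with
  | zero => simp [wT]
  | succ b ih =>
      rw [Nat.add_succ]
      simp only [wT, ih]
      ring

lemma wT_mod_two (s : ℕ) (hs : s % 2 = 1) (m : ℕ) : wT s m % 2 = m % 2 := by
  induction m with
  | zero => simp [wT]
  | succ m ih =>
      simp only [wT]
      rw [Nat.add_mod, Nat.mul_mod, hs, ih]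
      omega

lemma pow_mod_four (s : ℕ) (hs : s % 4 = 1) (m : ℕ) : s ^ m % 4 = 1 := by
  induction m with
  | zero => simp
  | succ m ih =>
      rw [pow_succ, Nat.mul_mod, ih, hs]

lemma wT_key (s : ℕ) (hs : s % 4 = 1) (k : ℕ) : ∀ m : ℕ, 2 ^ k ∣ wT s m ↔ 2 ^ k ∣ m := by
  induction k with
  | zero => simp
  | succ k ihk =>
      intro m
      rcases Nat.even_or_odd m with ⟨m', rfl⟩ | hodd
      · have h4 := pow_mod_four s hs m'
        obtain ⟨t, ht⟩ : ∃ t, 1 + s ^ m' = 2 * (2 * t + 1) := ⟨s ^ m' / 4, by omega⟩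
        have h2 : wT s (m' + m') = 2 * ((2 * t + 1) * wT s m') := by
          rw [wT_add]
          have : wT s m' + s ^ m' * wT s m' = (1 + s ^ m') * wT s m' := by ring
          rw [this, ht]; ring
        have hcop : Nat.Coprime (2 ^ k) (2 * t + 1) :=
          ((Nat.Prime.coprime_iff_not_dvd Nat.prime_two).2 (by omega)).pow_left k
        have e1 : 2 ^ (k + 1) ∣ wT s (m' + m') ↔ 2 ^ k ∣ (2 * t + 1) * wT s m' := by
          rw [h2, pow_succ, Nat.mul_comm (2 ^ k) 2]
          exact Nat.mul_dvd_mul_iff_left (by norm_num)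
        have e2 : 2 ^ k ∣ (2 * t + 1) * wT s m' ↔ 2 ^ k ∣ wT s m' := by
          constructor
          · exact fun h => hcop.dvd_of_dvd_mul_left h
          · exact fun h => h.mul_left _
        have e3 : 2 ^ (k + 1) ∣ m' + m' ↔ 2 ^ k ∣ m' := by
          have : m' + m' = 2 * m' := by ring
          rw [this, pow_succ, Nat.mul_comm (2 ^ k) 2]
          exact Nat.mul_dvd_mul_iff_left (by norm_num)
        rw [e1, e2, ihk, e3]
      · have hsodd : s % 2 = 1 := by omega
        have hTodd := wT_mod_two s hsodd m
        have hm : m % 2 = 1 := Nat.odd_iff.1 hodd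
        have h2 : (2:ℕ) ∣ 2 ^ (k + 1) := dvd_pow_self 2 (Nat.succ_ne_zero k)
        constructor
        · intro hd
          exact absurd (h2.trans hd) (by omega)
        · intro hd
          exact absurd (h2.trans hd) (by omega)

lemma wT_modEq (s : ℕ) (hs : s % 4 = 1) (k : ℕ) (i j : ℕ) :
    wT s i ≡ wT s j [MOD 2 ^ k] ↔ i ≡ j [MOD 2 ^ k] := by
  have hcop : ∀ j : ℕ, Nat.Coprime (2 ^ k) (s ^ j) := fun j =>
    (((Nat.Prime.coprime_iff_not_dvd Nat.prime_two).2 (by omega)).pow_left k).pow_right j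
  have main : ∀ i j : ℕ, j ≤ i → (wT s i ≡ wT s j [MOD 2 ^ k] ↔ i ≡ j [MOD 2 ^ k]) := by
    intro i j hji
    obtain ⟨d, rfl⟩ := Nat.exists_eq_add_of_le hji
    have hT : wT s (j + d) = wT s j + s ^ j * wT s d := by
      rw [Nat.add_comm j d, wT_add]
    rw [Nat.ModEq.comm, Nat.modEq_iff_dvd' (by omega : wT s j ≤ wT s (j + d)),
      Nat.ModEq.comm, Nat.modEq_iff_dvd' (by omega : j ≤ j + d)]
    rw [hT]
    simp only [Nat.add_sub_cancel_left]
    constructor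
    · intro h; exact (wT_key s hs k d).1 ((hcop j).dvd_of_dvd_mul_left h)
    · intro h; exact Dvd.dvd.mul_left ((wT_key s hs k d).2 h) _
  rcases le_total j i with h | h
  · exact main i j h
  · rw [Nat.ModEq.comm (n := 2 ^ k) (a := wT s i), Nat.ModEq.comm (n := 2^k) (a := i)]
    exact main j i h

open Subgroup
open scoped commutatorElement

lemma step1 (G : Type*) [Group G] [Finite G] (hG : IsPGroup 2 G)
    (hna : ¬ ∀ x y : G, x * y = y * x) (hcyc : IsCyclic (commutator G)) :
    ∃ (g h : G) (k : ℕ), Subgroup.zpowers ⁅g, h⁆ = commutator G ∧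
      orderOf ⁅g, h⁆ = Nat.card (commutator G) ∧
      Nat.card (commutator G) = 2 ^ k ∧ 1 ≤ k := by
  obtain ⟨k, hk⟩ := (hG.to_subgroup (commutator G)).exists_card_eq
  obtain ⟨x, y, hxy⟩ : ∃ x y : G, ⁅x, y⁆ ≠ 1 := by
    by_contra hc
    push_neg at hc
    exact hna fun a b => commutatorElement_eq_one_iff_mul_comm.1 (hc a b)
  have hmemC : ∀ a b : G, ⁅a, b⁆ ∈ commutator G := fun a b =>
    commutator_mem_commutator (mem_top a) (mem_top b)
  have hnontriv : Nontrivial (commutator G) :=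
    ⟨⟨⁅x, y⁆, hmemC x y⟩, 1, by simpa [Subtype.ext_iff] using hxy⟩
  have hn2 : 2 ≤ Nat.card (commutator G) := Finite.one_lt_card_iff_nontrivial.2 hnontriv
  have hk1 : 1 ≤ k := by
    rcases Nat.eq_zero_or_pos k with rfl | h
    · rw [pow_zero] at hk; omega
    · exact h
  have hcomm : ∀ a b : G, a ∈ commutator G → b ∈ commutator G → a * b = b * a := by
    intro a b ha hb
    letI := hcyc.commGroup
    have : (⟨a, ha⟩ * ⟨b, hb⟩ : commutator G) = ⟨b, hb⟩ * ⟨a, ha⟩ := mul_comm _ _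
    simpa [Subtype.ext_iff] using this
  have hhalf : (2:ℕ) ^ k / 2 = 2 ^ (k - 1) := by
    have h2 : (2:ℕ) ^ k = 2 ^ (k-1) * 2 := by
      rw [← pow_succ]; congr 1; omega
    rw [h2, Nat.mul_div_cancel _ (by norm_num)]
  let Ks : Subgroup G :=
    { carrier := {x | x ∈ commutator G ∧ x ^ (Nat.card (commutator G) / 2) = 1}
      one_mem' := ⟨one_mem _, one_pow _⟩
      mul_mem' := by
        rintro a b ⟨ha, ha2⟩ ⟨hb, hb2⟩
        refine ⟨mul_mem ha hb, ?_⟩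
        rw [Commute.mul_pow (hcomm a b ha hb), ha2, hb2, one_mul]
      inv_mem' := by
        rintro a ⟨ha, ha2⟩
        exact ⟨inv_mem ha, by rw [inv_pow, ha2, inv_one]⟩ }
  obtain ⟨g, h, hgh⟩ : ∃ g h : G, ⁅g, h⁆ ^ (Nat.card (commutator G) / 2) ≠ 1 := by
    by_contra hc
    push_neg at hc
    have hle : commutator G ≤ Ks := by
      rw [commutator_eq_closure]
      refine Subgroup.closure_le _ |>.2 ?_
      rintro w ⟨a, b, rfl⟩
      exact ⟨hmemC a b, hc a b⟩
    obtain ⟨ξ, hξ⟩ := hcyc.exists_ofOrder_eq_natCard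
    have hξm : (ξ : G) ^ (Nat.card (commutator G) / 2) = 1 := (hle ξ.2).2
    have : ξ ^ (Nat.card (commutator G) / 2) = 1 := by
      ext; simpa using hξm
    have hdvd : orderOf ξ ∣ Nat.card (commutator G) / 2 := orderOf_dvd_of_pow_eq_one this
    rw [hξ] at hdvd
    have := Nat.le_of_dvd (by omega) hdvd
    omega
  have hc : ⁅g, h⁆ ∈ commutator G := hmemC g h
  have horder : orderOf ⁅g, h⁆ = Nat.card (commutator G) := by
    have hdvd : orderOf ⁅g, h⁆ ∣ Nat.card (commutator G) := Subgroup.orderOf_dvd_natCard _ hc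
    rw [hk] at hdvd
    obtain ⟨j, hj, hje⟩ := (Nat.dvd_prime_pow Nat.prime_two).1 hdvd
    rcases Nat.lt_or_ge j k with hjk | hjk
    · exfalso
      apply hgh
      refine orderOf_dvd_iff_pow_eq_one.1 ?_
      rw [hje, hk, hhalf]
      exact pow_dvd_pow 2 (by omega)
    · rw [hk, hje]
      congr 1
      omega
  refine ⟨g, h, k, ?_, horder, hk, hk1⟩
  apply Subgroup.eq_of_le_of_card_ge (Subgroup.zpowers_le.2 hc)
  rw [Nat.card_zpowers, horder]

lemma conjexp {G : Type*} [Group G] [Finite G] {c : G}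
    (hzp : Subgroup.zpowers c = commutator G) (h2 : 2 ∣ orderOf c) (u : G) :
    ∃ s : ℕ, u * c * u⁻¹ = c ^ s ∧ s % 2 = 1 := by
  have hcm : c ∈ commutator G := hzp ▸ Subgroup.mem_zpowers c
  have hmem : u * c * u⁻¹ ∈ Subgroup.zpowers c := by
    rw [hzp]
    exact (Subgroup.Normal.conj_mem inferInstance c hcm u)
  obtain ⟨s, hs⟩ := mem_powers_iff_mem_zpowers.2 hmem
  refine ⟨s, hs.symm, ?_⟩
  have horder : orderOf (u * c * u⁻¹) = orderOf c := by
    have := orderOf_injective (MulAut.conj u).toMonoidHom (MulEquiv.injective _) c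
    simpa [MulAut.conj] using this
  rw [← hs, orderOf_pow] at horder
  have hd1 : (orderOf c).gcd s = 1 := by
    rcases (Nat.div_eq_self).1 horder with h0 | h1
    · have := orderOf_pos c; omega
    · exact h1
  rcases Nat.even_or_odd s with ⟨t, rfl⟩ | hodd
  · exfalso
    have h22 : (2:ℕ) ∣ Nat.gcd (orderOf c) (t + t) := Nat.dvd_gcd h2 ⟨t, by ring⟩
    rw [hd1] at h22
    omega
  · exact Nat.odd_iff.1 hodd

lemma step2 (G : Type*) [Group G] [Finite G] (hG : IsPGroup 2 G)
    (hna : ¬ ∀ x y : G, x * y = y * x) (hcyc : IsCyclic (commutator G)) :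
    ∃ (g h c : G) (s k : ℕ), c = ⁅g, h⁆ ∧ Subgroup.zpowers c = commutator G ∧
      orderOf c = Nat.card (commutator G) ∧
      g * c * g⁻¹ = c ^ s ∧ s % 4 = 1 ∧
      Nat.card (commutator G) = 2 ^ k ∧ 1 ≤ k := by
  obtain ⟨g, h, k, hzp, hord, hk, hk1⟩ := step1 G hG hna hcyc
  have h2 : 2 ∣ orderOf ⁅g, h⁆ := by
    rw [hord, hk]
    exact dvd_pow_self 2 (by omega)
  obtain ⟨s, hs, hs2⟩ := conjexp hzp h2 g
  rcases Nat.lt_or_ge (s % 4) 2 with hs4 | hs4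
  · -- s % 4 = 1
    exact ⟨g, h, ⁅g, h⁆, s, k, rfl, hzp, hord, hs, by omega, hk, hk1⟩
  · -- s % 4 = 3
    obtain ⟨t, ht, ht2⟩ := conjexp hzp h2 h
    rcases Nat.lt_or_ge (t % 4) 2 with ht4 | ht4
    · -- t % 4 = 1 : use (h, g, c⁻¹, t)
      refine ⟨h, g, ⁅h, g⁆, t, k, rfl, ?_, ?_, ?_, by omega, hk, hk1⟩
      · rw [← commutatorElement_inv, Subgroup.zpowers_inv, hzp]
      · rw [← commutatorElement_inv, orderOf_inv, hord]
      · rw [← commutatorElement_inv, inv_pow, ← ht]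
        simp [mul_assoc]
    · -- t % 4 = 3 : use (g*h, h, c, s*t)
      refine ⟨g * h, h, ⁅g * h, h⁆, s * t, k, rfl, ?_, ?_, ?_, ?_, hk, hk1⟩
      · have : ⁅g * h, h⁆ = ⁅g, h⁆ := by group
        rw [this, hzp]
      · have : ⁅g * h, h⁆ = ⁅g, h⁆ := by group
        rw [this, hord]
      · have hgh : ⁅g * h, h⁆ = ⁅g, h⁆ := by group
        rw [hgh, mul_inv_rev]
        have hassoc : g * h * ⁅g, h⁆ * (h⁻¹ * g⁻¹) = g * (h * ⁅g, h⁆ * h⁻¹) * g⁻¹ := by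
          group
        rw [hassoc, ht, ← conj_pow, hs, ← pow_mul]
      · have : s % 4 = 3 ∧ t % 4 = 3 := ⟨by omega, by omega⟩
        rw [Nat.mul_mod, this.1, this.2]

set_option maxHeartbeats 800000 in
lemma step3 (G : Type*) [Group G] [Finite G] (hG : IsPGroup 2 G)
    (hna : ¬ ∀ x y : G, x * y = y * x) (hcyc : IsCyclic (commutator G))
    (z : G) (hzc : z ∈ Subgroup.center G) (hzG' : z ∉ commutator G) :
    ∃ (g : G) (hh : ZMod (Nat.card (commutator G)) → G),
      (∀ a, g * hh a * g⁻¹ = hh (a + 1)) ∧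
      Function.Injective hh ∧
      (∀ a b, z * hh a ≠ hh b) ∧
      (∀ a, hh a ≠ 1) ∧
      (∀ a, hh a ≠ z) ∧
      (Nat.card (commutator G)) ∣ orderOf g ∧ 2 ≤ Nat.card (commutator G) := by
  obtain ⟨g, h, c, s, k, hcdef, hzp, hordc, hconj, hs4, hk, hk1⟩ := step2 G hG hna hcyc
  have hn2 : 2 ≤ Nat.card (commutator G) := by
    rw [hk]
    calc (2:ℕ) = 2 ^ 1 := (pow_one 2).symm
      _ ≤ 2 ^ k := Nat.pow_le_pow_right (by norm_num) hk1
  haveI : NeZero (Nat.card (commutator G)) := ⟨by omega⟩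
  have hgh : g * h * g⁻¹ = c * h := by
    rw [hcdef, commutatorElement_def]; group
  have F : ∀ j : ℕ, g ^ j * h * (g ^ j)⁻¹ = c ^ wT s j * h := by
    intro j
    induction j with
    | zero => simp [wT]
    | succ j ih =>
        have hp : g ^ (j + 1) = g * g ^ j := by rw [pow_succ']
        rw [hp, mul_inv_rev]
        have e0 : g * g ^ j * h * ((g ^ j)⁻¹ * g⁻¹) = g * (g ^ j * h * (g ^ j)⁻¹) * g⁻¹ := by
          group
        rw [e0, ih]
        have e1 : g * (c ^ wT s j * h) * g⁻¹ = (g * c ^ wT s j * g⁻¹) * (g * h * g⁻¹) := by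
          group
        rw [e1, ← conj_pow, hconj, hgh, ← pow_mul]
        show c ^ (s * wT s j) * (c * h) = c ^ wT s (j + 1) * h
        have e2 : c ^ (s * wT s j) * (c * h) = c ^ (s * wT s j + 1) * h := by
          rw [pow_add, pow_one]; group
        rw [e2]
        rfl
  have hno : Nat.card (commutator G) ∣ orderOf g := by
    have h1 := F (orderOf g)
    rw [pow_orderOf_eq_one] at h1
    simp only [one_mul, inv_one, mul_one] at h1
    have h1' : c ^ wT s (orderOf g) * h = h := h1.symm
    have hc1 : c ^ wT s (orderOf g) = 1 := by
      calc c ^ wT s (orderOf g) = (c ^ wT s (orderOf g) * h) * h⁻¹ := by group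
        _ = h * h⁻¹ := by rw [h1']
        _ = 1 := mul_inv_cancel h
    have hdvd : orderOf c ∣ wT s (orderOf g) := orderOf_dvd_of_pow_eq_one hc1
    rw [hordc, hk] at hdvd
    rw [hk]
    exact (wT_key s hs4 k _).1 hdvd
  have cpow_eq : ∀ i j : ℕ, c ^ i = c ^ j ↔ i ≡ j [MOD Nat.card (commutator G)] := by
    intro i j
    rw [pow_eq_pow_iff_modEq, hordc]
  have P2 : ∀ i j : ℕ, wT s i ≡ wT s j [MOD Nat.card (commutator G)] ↔
      i ≡ j [MOD Nat.card (commutator G)] := by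
    intro i j; rw [hk]; exact wT_modEq s hs4 k i j
  have valeq : ∀ a b : ZMod (Nat.card (commutator G)),
      a.val ≡ b.val [MOD Nat.card (commutator G)] ↔ a = b := by
    intro a b
    rw [← ZMod.natCast_eq_natCast_iff, ZMod.natCast_val, ZMod.cast_id,
      ZMod.natCast_val, ZMod.cast_id]
  -- elements of the form c ^ e * h are never central
  have hcent : ∀ (e : ℕ) (w : G), w ∈ Subgroup.center G → c ^ e * h ≠ w := by
    intro e w hw heq
    have hh' : h = (c ^ e)⁻¹ * w := by
      rw [← heq]; group
    have hcc : c = (g * (c ^ e)⁻¹ * g⁻¹) * c ^ e := by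
      conv_lhs => rw [hcdef, commutatorElement_def, hh']
      have hwc : ∀ x : G, w * x = x * w := fun x => (Subgroup.mem_center_iff.1 hw x).symm
      calc g * ((c ^ e)⁻¹ * w) * g⁻¹ * ((c ^ e)⁻¹ * w)⁻¹
          = g * (c ^ e)⁻¹ * (w * g⁻¹) * (w⁻¹ * c ^ e) := by group
        _ = g * (c ^ e)⁻¹ * (g⁻¹ * w) * (w⁻¹ * c ^ e) := by rw [hwc g⁻¹]
        _ = (g * (c ^ e)⁻¹ * g⁻¹) * c ^ e := by group
    have hc2 : (c : G) ^ (1 : ℤ) = c ^ ((e : ℤ) - (s : ℤ) * (e : ℤ)) := by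
      have hst : g * (c ^ e)⁻¹ * g⁻¹ = ((c ^ s) ^ e)⁻¹ := by
        have h0 : g * (c ^ e)⁻¹ * g⁻¹ = (g * c ^ e * g⁻¹)⁻¹ := by group
        rw [h0, ← conj_pow, hconj]
      have hinv : ((c ^ s) ^ e)⁻¹ = c ^ (-((s:ℤ) * (e:ℤ))) := by
        rw [← pow_mul, ← zpow_natCast c (s * e), ← zpow_neg]
        norm_cast
      calc (c : G) ^ (1:ℤ) = c := zpow_one c
        _ = (g * (c ^ e)⁻¹ * g⁻¹) * c ^ e := hcc
        _ = c ^ (-((s:ℤ) * (e:ℤ))) * c ^ (e:ℤ) := by rw [hst, hinv, zpow_natCast]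
        _ = c ^ ((e : ℤ) - (s : ℤ) * (e : ℤ)) := by rw [← zpow_add]; congr 1; ring
    rw [zpow_eq_zpow_iff_modEq, hordc] at hc2
    have hdvd : ((Nat.card (commutator G) : ℤ)) ∣ ((e : ℤ) - (s : ℤ) * (e : ℤ)) - 1 :=
      Int.ModEq.dvd hc2
    obtain ⟨q, hq⟩ := hdvd
    obtain ⟨n', hn'⟩ : (2:ℕ) ∣ Nat.card (commutator G) := by
      rw [hk]; exact dvd_pow_self 2 (by omega)
    obtain ⟨u, hu⟩ : (4:ℕ) ∣ s - 1 := by omega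
    have hs1 : (s : ℤ) = 4 * (u : ℤ) + 1 := by omega
    have hn'' : ((Nat.card (commutator G) : ℤ)) = 2 * (n' : ℤ) := by
      rw [hn']; push_cast; ring
    rw [hs1, hn''] at hq
    have heq2 : (e : ℤ) - (4 * (u:ℤ) + 1) * e - 1 = -4 * ((u:ℤ) * e) - 1 := by ring
    rw [heq2] at hq
    have h2q : (2:ℤ) ∣ 2 * (n':ℤ) * q := ⟨(n':ℤ) * q, by ring⟩
    rw [← hq] at h2q
    omega
  refine ⟨g, fun a => c ^ wT s a.val * h, ?_, ?_, ?_, ?_, ?_, hno, hn2⟩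
  · -- shift
    intro a
    show g * (c ^ wT s a.val * h) * g⁻¹ = c ^ wT s (a + 1).val * h
    have e1 : g * (c ^ wT s a.val * h) * g⁻¹ = (g * c ^ wT s a.val * g⁻¹) * (g * h * g⁻¹) := by
      group
    rw [e1, ← conj_pow, hconj, hgh, ← pow_mul]
    have e2 : c ^ (s * wT s a.val) * (c * h) = c ^ (s * wT s a.val + 1) * h := by
      rw [pow_add, pow_one]; group
    rw [e2]
    congr 1
    show (c : G) ^ wT s (a.val + 1) = c ^ wT s ((a + 1).val)
    rw [cpow_eq, P2]
    rw [← ZMod.natCast_eq_natCast_iff]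
    push_cast
    rw [ZMod.natCast_val, ZMod.cast_id, ZMod.natCast_val, ZMod.cast_id]
  · -- injectivity
    intro a b hab
    have hab' : c ^ wT s a.val * h = c ^ wT s b.val * h := hab
    have h1 : c ^ wT s a.val = c ^ wT s b.val := mul_right_cancel hab'
    rw [cpow_eq, P2, valeq] at h1
    exact h1
  · -- z * hh a ≠ hh b
    intro a b hab
    have hab' : z * (c ^ wT s a.val * h) = c ^ wT s b.val * h := hab
    apply hzG'
    have hz' : z = c ^ wT s b.val * (c ^ wT s a.val)⁻¹ := by
      calc z = (z * (c ^ wT s a.val * h)) * (c ^ wT s a.val * h)⁻¹ := by group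
        _ = (c ^ wT s b.val * h) * (c ^ wT s a.val * h)⁻¹ := by rw [hab']
        _ = c ^ wT s b.val * (c ^ wT s a.val)⁻¹ := by group
    rw [hz']
    have hmem : c ^ wT s b.val * (c ^ wT s a.val)⁻¹ ∈ Subgroup.zpowers c :=
      Subgroup.mul_mem _ (Subgroup.pow_mem _ (Subgroup.mem_zpowers c) _)
        (Subgroup.inv_mem _ (Subgroup.pow_mem _ (Subgroup.mem_zpowers c) _))
    rwa [hzp] at hmem
  · -- hh a ≠ 1
    intro a
    exact hcent _ 1 (Subgroup.one_mem _)
  · -- hh a ≠ z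
    intro a
    exact hcent _ z hzc

section Alg

variable (K : Type*) [Field K] [CharP K 2] {G : Type*} [Group G]

/-- The group of trivial units of a group algebra. -/
noncomputable def grpUnit : G →* (MonoidAlgebra K G)ˣ where
  toFun g :=
    { val := MonoidAlgebra.of K G g
      inv := MonoidAlgebra.of K G g⁻¹
      val_inv := by rw [← map_mul, mul_inv_cancel, map_one]
      inv_val := by rw [← map_mul, inv_mul_cancel, map_one] }
  map_one' := Units.ext (by simp [MonoidAlgebra.one_def])
  map_mul' a b := Units.ext (by simp)

@[simp] lemma grpUnit_val (g : G) : (grpUnit K g : MonoidAlgebra K G) = MonoidAlgebra.of K G g :=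
  rfl

lemma char2_add_self (a : MonoidAlgebra K G) : a + a = 0 := by
  have h := (two_smul K a).symm
  have h2 : (2 : K) = 0 := by
    have := CharP.cast_eq_zero K 2
    exact_mod_cast this
  rw [h, h2, zero_smul]

variable (z : G)

/-- `ε = 1 + z`. -/
noncomputable def eps : MonoidAlgebra K G := 1 + MonoidAlgebra.of K G z

lemma eps_comm_of (hzc : z ∈ Subgroup.center G) (w : G) :
    eps K z * MonoidAlgebra.of K G w = MonoidAlgebra.of K G w * eps K z := by
  unfold eps
  rw [add_mul, mul_add, one_mul, mul_one, ← map_mul, ← map_mul,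
    (Subgroup.mem_center_iff.1 hzc w)]

lemma eps_sq (hz2 : z ^ 2 = 1) : eps K z * eps K z = 0 := by
  have hzz : MonoidAlgebra.of K G z * MonoidAlgebra.of K G z = 1 := by
    rw [← map_mul]
    have : z * z = 1 := by rw [← pow_two, hz2]
    rw [this, map_one]
  have h2 : eps K z * eps K z = 1 + MonoidAlgebra.of K G z + MonoidAlgebra.of K G z +
      MonoidAlgebra.of K G z * MonoidAlgebra.of K G z := by
    unfold eps; noncomm_ring
  rw [h2, hzz]
  have h3 : (1:MonoidAlgebra K G) + MonoidAlgebra.of K G z + MonoidAlgebra.of K G z + 1 =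
      (1 + 1) + (MonoidAlgebra.of K G z + MonoidAlgebra.of K G z) := by abel
  rw [h3, char2_add_self, char2_add_self, add_zero]

variable {n : ℕ} [NeZero n]

/-- The coefficient map `ZMod 2 → K`. -/
noncomputable def kap : ZMod 2 →+* K := ZMod.castHom (dvd_refl 2) K

/-- The element `∑ v_a (hh a)` of the group algebra. -/
noncomputable def xelt (hh : ZMod n → G)
    (v : Multiplicative (ZMod n) → Multiplicative (ZMod 2)) : MonoidAlgebra K G :=
  ∑ a : Multiplicative (ZMod n),
    (kap K (Multiplicative.toAdd (v a))) • (MonoidAlgebra.of K G (hh (Multiplicative.toAdd a)))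

lemma xelt_mul (hh : ZMod n → G) (v w : Multiplicative (ZMod n) → Multiplicative (ZMod 2)) :
    xelt K hh (v * w) = xelt K hh v + xelt K hh w := by
  unfold xelt
  rw [← Finset.sum_add_distrib]
  congr 1
  funext a
  rw [← add_smul]
  congr 1
  show kap K (Multiplicative.toAdd (v a) + Multiplicative.toAdd (w a)) = _
  rw [map_add]

lemma xelt_one (hh : ZMod n → G) : xelt K hh 1 = 0 := by
  unfold xelt
  refine Finset.sum_eq_zero fun a _ => ?_
  show (kap K (Multiplicative.toAdd (1 : Multiplicative (ZMod 2)))) • _ = 0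
  rw [toAdd_one, map_zero, zero_smul]

lemma sigma_mul_xelt (hh : ZMod n → G) (v) :
    MonoidAlgebra.of K G z * xelt K hh v =
      ∑ a : Multiplicative (ZMod n),
        (kap K (Multiplicative.toAdd (v a))) •
          (MonoidAlgebra.of K G (z * hh (Multiplicative.toAdd a))) := by
  unfold xelt
  rw [Finset.mul_sum]
  congr 1
  funext a
  rw [mul_smul_comm, ← map_mul]

lemma eps_comm_xelt (hzc : z ∈ Subgroup.center G) (hh : ZMod n → G) (v) :
    eps K z * xelt K hh v = xelt K hh v * eps K z := by
  unfold xelt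
  rw [Finset.mul_sum, Finset.sum_mul]
  congr 1
  funext a
  rw [mul_smul_comm, smul_mul_assoc, eps_comm_of K z hzc]

lemma baseUnit_val_sq (hzc : z ∈ Subgroup.center G) (hz2 : z ^ 2 = 1)
    (hh : ZMod n → G) (v) :
    (1 + eps K z * xelt K hh v) * (1 + eps K z * xelt K hh v) = 1 := by
  have hx := eps_comm_xelt K z hzc hh v
  have hsq : (eps K z * xelt K hh v) * (eps K z * xelt K hh v) = 0 := by
    calc (eps K z * xelt K hh v) * (eps K z * xelt K hh v)
        = eps K z * (xelt K hh v * eps K z) * xelt K hh v := by noncomm_ring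
      _ = eps K z * (eps K z * xelt K hh v) * xelt K hh v := by rw [hx]
      _ = (eps K z * eps K z) * (xelt K hh v * xelt K hh v) := by noncomm_ring
      _ = 0 := by rw [eps_sq K z hz2, zero_mul]
  calc (1 + eps K z * xelt K hh v) * (1 + eps K z * xelt K hh v)
      = 1 + ((eps K z * xelt K hh v) + (eps K z * xelt K hh v)) +
        (eps K z * xelt K hh v) * (eps K z * xelt K hh v) := by noncomm_ring
    _ = 1 := by rw [hsq, char2_add_self, add_zero, add_zero]

/-- The units `1 + ε x(v)`. -/
noncomputable def baseUnit (hzc : z ∈ Subgroup.center G) (hz2 : z ^ 2 = 1) (hh : ZMod n → G) :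
    (Multiplicative (ZMod n) → Multiplicative (ZMod 2)) →* (MonoidAlgebra K G)ˣ where
  toFun v :=
    { val := 1 + eps K z * xelt K hh v
      inv := 1 + eps K z * xelt K hh v
      val_inv := baseUnit_val_sq K z hzc hz2 hh v
      inv_val := baseUnit_val_sq K z hzc hz2 hh v }
  map_one' := Units.ext (by
    show 1 + eps K z * xelt K hh 1 = 1
    rw [xelt_one, mul_zero, add_zero])
  map_mul' v w := Units.ext (by
    show (1 : MonoidAlgebra K G) + eps K z * xelt K hh (v * w) =
      (1 + eps K z * xelt K hh v) * (1 + eps K z * xelt K hh w)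
    have hsq : (eps K z * xelt K hh v) * (eps K z * xelt K hh w) = 0 := by
      calc (eps K z * xelt K hh v) * (eps K z * xelt K hh w)
          = eps K z * (xelt K hh v * eps K z) * xelt K hh w := by noncomm_ring
        _ = eps K z * (eps K z * xelt K hh v) * xelt K hh w := by
            rw [eps_comm_xelt K z hzc hh v]
        _ = (eps K z * eps K z) * (xelt K hh v * xelt K hh w) := by noncomm_ring
        _ = 0 := by rw [eps_sq K z hz2, zero_mul]
    rw [xelt_mul, mul_add]
    calc (1:MonoidAlgebra K G) + (eps K z * xelt K hh v + eps K z * xelt K hh w)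
        = 1 + eps K z * xelt K hh v + eps K z * xelt K hh w + 0 := by abel
      _ = 1 + eps K z * xelt K hh v + eps K z * xelt K hh w +
          (eps K z * xelt K hh v) * (eps K z * xelt K hh w) := by rw [hsq]
      _ = (1 + eps K z * xelt K hh v) * (1 + eps K z * xelt K hh w) := by noncomm_ring)

@[simp] lemma baseUnit_val (hzc) (hz2 : z ^ 2 = 1) (hh : ZMod n → G) (v) :
    (baseUnit K z hzc hz2 hh v : MonoidAlgebra K G) = 1 + eps K z * xelt K hh v := rfl

end Alg

section Alg2
open scoped Classical

variable (K : Type*) [Field K] [CharP K 2] {G : Type*} [Group G] (z : G)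
variable {n : ℕ} [NeZero n]

open scoped Classical in
lemma eval_lhs (hh : ZMod n → G) (v) (p : G) :
    ((1 : MonoidAlgebra K G) + eps K z * xelt K hh v).coeff p
      = (if (1:G) = p then (1:K) else 0)
        + (∑ a : Multiplicative (ZMod n),
            kap K (Multiplicative.toAdd (v a)) * (if hh (Multiplicative.toAdd a) = p then 1 else 0))
        + (∑ a : Multiplicative (ZMod n),
            kap K (Multiplicative.toAdd (v a)) *
              (if z * hh (Multiplicative.toAdd a) = p then 1 else 0)) := by
  have hsplit : (1 : MonoidAlgebra K G) + eps K z * xelt K hh v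
      = 1 + xelt K hh v + MonoidAlgebra.of K G z * xelt K hh v := by
    unfold eps
    noncomm_ring
  rw [hsplit, sigma_mul_xelt K z hh v]
  rw [MonoidAlgebra.coeff_add, MonoidAlgebra.coeff_add, Finsupp.add_apply, Finsupp.add_apply]
  congr 1
  · congr 1
    · rw [MonoidAlgebra.one_def, MonoidAlgebra.coeff_single, Finsupp.single_apply]
    · unfold xelt
      rw [MonoidAlgebra.coeff_sum, Finsupp.finset_sum_apply]
      congr 1
      funext a
      rw [MonoidAlgebra.coeff_smul_apply, MonoidAlgebra.of_apply, MonoidAlgebra.coeff_single, Finsupp.single_apply, smul_eq_mul]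
  · rw [MonoidAlgebra.coeff_sum, Finsupp.finset_sum_apply]
    congr 1
    funext a
    rw [MonoidAlgebra.coeff_smul_apply, MonoidAlgebra.of_apply, MonoidAlgebra.coeff_single, Finsupp.single_apply, smul_eq_mul]

lemma main_inj (hz1 : z ≠ 1) (hz2 : z ^ 2 = 1) (hh : ZMod n → G)
    (hinj : Function.Injective hh) (hzne : ∀ a b, z * hh a ≠ hh b)
    (hne1 : ∀ a, hh a ≠ 1) (hnez : ∀ a, hh a ≠ z)
    (v) (w₀ : G)
    (hE : (1 : MonoidAlgebra K G) + eps K z * xelt K hh v = MonoidAlgebra.of K G w₀) :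
    v = 1 ∧ w₀ = 1 := by
  have hz2' : ∀ x : ZMod 2, x ≠ 0 → x = 1 := by decide
  have hzinv : z⁻¹ = z := by
    have hzz : z * z = 1 := by rw [← pow_two, hz2]
    exact inv_eq_of_mul_eq_one_right hzz
  have hv : ∀ b : Multiplicative (ZMod n), v b = 1 := by
    intro b
    by_contra hvb
    have hκ : kap K (Multiplicative.toAdd (v b)) = 1 := by
      have h0 : Multiplicative.toAdd (v b) ≠ 0 := by
        intro hc
        apply hvb
        have := congrArg Multiplicative.ofAdd hc
        simpa using this
      rw [hz2' _ h0, map_one]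
    -- evaluate at hh (toAdd b)
    have e1 := congrArg (fun f : MonoidAlgebra K G => f.coeff (hh (Multiplicative.toAdd b))) hE
    rw [eval_lhs] at e1
    rw [MonoidAlgebra.of_apply, MonoidAlgebra.coeff_single, Finsupp.single_apply] at e1
    have t1 : (if (1:G) = hh (Multiplicative.toAdd b) then (1:K) else 0) = 0 := by
      rw [if_neg (fun hc => (hne1 _ hc.symm))]
    have t2 : (∑ a : Multiplicative (ZMod n),
        kap K (Multiplicative.toAdd (v a)) *
          (if hh (Multiplicative.toAdd a) = hh (Multiplicative.toAdd b) then (1:K) else 0))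
        = kap K (Multiplicative.toAdd (v b)) := by
      rw [Finset.sum_eq_single b]
      · rw [if_pos rfl, mul_one]
      · intro a _ hab
        rw [if_neg, mul_zero]
        intro hc
        exact hab (by
          have := hinj hc
          have : Multiplicative.ofAdd (Multiplicative.toAdd a)
              = Multiplicative.ofAdd (Multiplicative.toAdd b) := congrArg _ this
          simpa using this)
      · intro hb; exact absurd (Finset.mem_univ b) hb
    have t3 : (∑ a : Multiplicative (ZMod n),
        kap K (Multiplicative.toAdd (v a)) *
          (if z * hh (Multiplicative.toAdd a) = hh (Multiplicative.toAdd b) then (1:K) else 0))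
        = 0 := by
      refine Finset.sum_eq_zero fun a _ => ?_
      rw [if_neg (hzne _ _), mul_zero]
    rw [t1, t2, t3, hκ, zero_add, add_zero] at e1
    -- e1 : 1 = if w₀ = hh b then 1 else 0
    have hw1 : w₀ = hh (Multiplicative.toAdd b) := by
      by_contra hc
      rw [if_neg hc] at e1
      exact one_ne_zero e1
    -- evaluate at z * hh (toAdd b)
    have e2 := congrArg (fun f : MonoidAlgebra K G => f.coeff (z * hh (Multiplicative.toAdd b))) hE
    rw [eval_lhs] at e2
    rw [MonoidAlgebra.of_apply, MonoidAlgebra.coeff_single, Finsupp.single_apply] at e2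
    have s1 : (if (1:G) = z * hh (Multiplicative.toAdd b) then (1:K) else 0) = 0 := by
      rw [if_neg]
      intro hc
      apply hnez (Multiplicative.toAdd b)
      have : z⁻¹ * 1 = z⁻¹ * (z * hh (Multiplicative.toAdd b)) := congrArg _ hc
      rw [mul_one, ← mul_assoc, inv_mul_cancel, one_mul] at this
      rw [← this, hzinv]
    have s2 : (∑ a : Multiplicative (ZMod n),
        kap K (Multiplicative.toAdd (v a)) *
          (if hh (Multiplicative.toAdd a) = z * hh (Multiplicative.toAdd b) then (1:K) else 0))
        = 0 := by
      refine Finset.sum_eq_zero fun a _ => ?_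
      rw [if_neg (fun hc => (hzne _ _) hc.symm), mul_zero]
    have s3 : (∑ a : Multiplicative (ZMod n),
        kap K (Multiplicative.toAdd (v a)) *
          (if z * hh (Multiplicative.toAdd a) = z * hh (Multiplicative.toAdd b) then (1:K) else 0))
        = kap K (Multiplicative.toAdd (v b)) := by
      rw [Finset.sum_eq_single b]
      · rw [if_pos rfl, mul_one]
      · intro a _ hab
        rw [if_neg, mul_zero]
        intro hc
        have := hinj (mul_left_cancel hc)
        exact hab (by
          have h2 : Multiplicative.ofAdd (Multiplicative.toAdd a)
              = Multiplicative.ofAdd (Multiplicative.toAdd b) := congrArg _ this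
          simpa using h2)
      · intro hb; exact absurd (Finset.mem_univ b) hb
    rw [s1, s2, s3, hκ, zero_add, zero_add] at e2
    have hw2 : w₀ = z * hh (Multiplicative.toAdd b) := by
      by_contra hc
      rw [if_neg hc] at e2
      exact one_ne_zero e2
    rw [hw1] at hw2
    have : (1:G) * hh (Multiplicative.toAdd b) = z * hh (Multiplicative.toAdd b) := by
      rw [one_mul, ← hw2]
    exact hz1 (mul_right_cancel this).symm
  have hv1 : v = 1 := funext fun b => hv b
  rw [hv1, xelt_one, mul_zero, add_zero] at hE
  refine ⟨hv1, ?_⟩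
  have : MonoidAlgebra.of K G 1 = MonoidAlgebra.of K G w₀ := by rw [map_one, hE]
  exact (MonoidAlgebra.of_injective this).symm

end Alg2

section Alg3

variable (K : Type*) [Field K] [CharP K 2] {G : Type*} [Group G] (z : G)
variable {n : ℕ} [NeZero n]

lemma conj_xelt (hh : ZMod n → G) (g : G)
    (hshiftZ : ∀ (j : ℤ) (a : ZMod n), g ^ j * hh a * (g ^ j)⁻¹ = hh (a + (j : ZMod n)))
    (j : ℤ) (v : Multiplicative (ZMod n) → Multiplicative (ZMod 2)) :
    MonoidAlgebra.of K G (g ^ j) * xelt K hh v * MonoidAlgebra.of K G ((g ^ j)⁻¹)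
      = xelt K hh
          (fun b => v ((Multiplicative.ofAdd ((j : ZMod n)))⁻¹ * b)) := by
  unfold xelt
  rw [Finset.mul_sum, Finset.sum_mul]
  refine Fintype.sum_equiv (Equiv.mulRight (Multiplicative.ofAdd ((j : ZMod n)))) _ _ ?_
  intro a
  rw [mul_smul_comm, smul_mul_assoc, ← map_mul, ← map_mul]
  rw [hshiftZ j (Multiplicative.toAdd a)]
  congr 2
  · show v a = v ((Multiplicative.ofAdd ((j : ZMod n)))⁻¹ *
      (a * Multiplicative.ofAdd ((j : ZMod n))))
    congr 1
    rw [mul_comm, mul_assoc, mul_inv_cancel, mul_one]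

end Alg3

set_option maxHeartbeats 1000000 in
/-- For a finite non-abelian 2-group `G` with cyclic derived subgroup and a
central involution `z ∉ G'`, the wreath product `C₂ ≀ C_{|G'|}` is involved in
the unit group of `K[G]` (char `K` = 2). -/
theorem wreath_product_involved_in_units
    (K G : Type*) [Field K] [CharP K 2] [Group G] [Finite G]
    (hG : IsPGroup 2 G) (hna : ¬ ∀ x y : G, x * y = y * x)
    (hcyc : IsCyclic (commutator G))
    (z : G) (hzc : z ∈ Subgroup.center G) (hzG' : z ∉ commutator G)
    (hz2 : z ^ 2 = 1) (hz1 : z ≠ 1) :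
    ∃ H : Subgroup (MonoidAlgebra K G)ˣ, ∃ N : Subgroup H, ∃ hN : N.Normal,
      letI := hN
      Nonempty (H ⧸ N ≃*
        WreathC2 (Multiplicative (ZMod (Nat.card (commutator G))))) := by
  classical
  obtain ⟨g, hh, hshift, hinj, hzne, hne1, hnez, hno, hn2⟩ := step3 G hG hna hcyc z hzc hzG'
  haveI : NeZero (Nat.card (commutator G)) := ⟨by omega⟩
  have hshift' : ∀ a, g⁻¹ * hh a * g = hh (a - 1) := by
    intro a
    have h1 := hshift (a - 1)
    rw [sub_add_cancel] at h1
    rw [← h1]; group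
  have hshiftZ : ∀ (j : ℤ) (a : ZMod (Nat.card (commutator G))),
      g ^ j * hh a * (g ^ j)⁻¹ = hh (a + (j : ZMod (Nat.card (commutator G)))) := by
    intro j
    induction j using Int.induction_on with
    | zero => intro a; simp
    | succ i ih =>
        intro a
        have hp : g ^ ((i:ℤ) + 1) = g ^ (i:ℤ) * g := by rw [zpow_add_one]
        rw [hp, mul_inv_rev]
        have e0 : g ^ (i:ℤ) * g * hh a * (g⁻¹ * (g ^ (i:ℤ))⁻¹)
            = g ^ (i:ℤ) * (g * hh a * g⁻¹) * (g ^ (i:ℤ))⁻¹ := by group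
        rw [e0, hshift, ih]
        congr 1
        push_cast
        ring
    | pred i ih =>
        intro a
        have hp : g ^ (-(i:ℤ) - 1) = g ^ (-(i:ℤ)) * g⁻¹ := by rw [zpow_sub_one]
        rw [hp, mul_inv_rev, inv_inv]
        have e0 : g ^ (-(i:ℤ)) * g⁻¹ * hh a * (g * (g ^ (-(i:ℤ)))⁻¹)
            = g ^ (-(i:ℤ)) * (g⁻¹ * hh a * g) * (g ^ (-(i:ℤ)))⁻¹ := by group
        rw [e0, hshift', ih]
        congr 1
        push_cast
        ring
  -- the various homomorphisms
  let castM : Multiplicative ℤ →* Multiplicative (ZMod (Nat.card (commutator G))) :=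
    AddMonoidHom.toMultiplicative (Int.castAddHom (ZMod (Nat.card (commutator G))))
  let preφ : Multiplicative ℤ →*
      MulAut (Multiplicative (ZMod (Nat.card (commutator G))) → Multiplicative (ZMod 2)) :=
    (wreathMap (Multiplicative (ZMod (Nat.card (commutator G))))).comp castM
  let φ := baseUnit K z hzc hz2 hh
  let gU : Multiplicative ℤ →* (MonoidAlgebra K G)ˣ := (grpUnit K).comp (zpowersHom G g)
  have hgUval : ∀ m : Multiplicative ℤ,
      (gU m : MonoidAlgebra K G) = MonoidAlgebra.of K G (g ^ (Multiplicative.toAdd m)) := fun m => rfl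
  have hgUinv : ∀ m : Multiplicative ℤ,
      ((gU m)⁻¹ : (MonoidAlgebra K G)ˣ) = (MonoidAlgebra.of K G ((g ^ (Multiplicative.toAdd m))⁻¹) :
        MonoidAlgebra K G) := fun m => rfl
  have compat : ∀ m : Multiplicative ℤ,
      φ.comp (preφ m).toMonoidHom = (MulAut.conj (gU m)).toMonoidHom.comp φ := by
    intro m
    refine MonoidHom.ext fun v => ?_
    apply Units.ext
    show (1 : MonoidAlgebra K G) + eps K z * xelt K hh (preφ m v)
        = ((gU m * φ v * (gU m)⁻¹ : (MonoidAlgebra K G)ˣ) : MonoidAlgebra K G)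
    rw [Units.val_mul, Units.val_mul, hgUval m, hgUinv m]
    have hpre : preφ m v = fun b => v ((Multiplicative.ofAdd
        (((Multiplicative.toAdd m : ℤ) : ZMod (Nat.card (commutator G)))))⁻¹ * b) := rfl
    rw [hpre]
    rw [← conj_xelt K hh g hshiftZ (Multiplicative.toAdd m) v]
    have hφval : ((φ v : (MonoidAlgebra K G)ˣ) : MonoidAlgebra K G)
        = 1 + eps K z * xelt K hh v := rfl
    rw [hφval]
    have hmove : MonoidAlgebra.of K G (g ^ (Multiplicative.toAdd m)) * (eps K z * xelt K hh v)
        = eps K z * (MonoidAlgebra.of K G (g ^ (Multiplicative.toAdd m)) * xelt K hh v) := by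
      rw [← mul_assoc, ← eps_comm_of K z hzc, mul_assoc]
    calc (1:MonoidAlgebra K G) + eps K z * (MonoidAlgebra.of K G (g ^ (Multiplicative.toAdd m)) *
            xelt K hh v * MonoidAlgebra.of K G ((g ^ (Multiplicative.toAdd m))⁻¹))
        = MonoidAlgebra.of K G (g ^ (Multiplicative.toAdd m)) *
            MonoidAlgebra.of K G ((g ^ (Multiplicative.toAdd m))⁻¹)
          + MonoidAlgebra.of K G (g ^ (Multiplicative.toAdd m)) * (eps K z * xelt K hh v) *
            MonoidAlgebra.of K G ((g ^ (Multiplicative.toAdd m))⁻¹) := by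
            rw [← map_mul, mul_inv_cancel, map_one, hmove]
            noncomm_ring
      _ = MonoidAlgebra.of K G (g ^ (Multiplicative.toAdd m)) *
            (1 + eps K z * xelt K hh v) * MonoidAlgebra.of K G ((g ^ (Multiplicative.toAdd m))⁻¹) := by
            noncomm_ring
  let Φ := SemidirectProduct.lift φ gU compat
  have compat2 : ∀ m : Multiplicative ℤ,
      (SemidirectProduct.inl (φ := wreathMap (Multiplicative (ZMod (Nat.card (commutator G)))))).comp
          (preφ m).toMonoidHom
        = (MulAut.conj ((SemidirectProduct.inr.comp castM) m)).toMonoidHom.comp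
            SemidirectProduct.inl := by
    intro m
    refine MonoidHom.ext fun v => ?_
    show SemidirectProduct.inl ((wreathMap _ (castM m)) v)
        = SemidirectProduct.inr (castM m) * SemidirectProduct.inl v *
            (SemidirectProduct.inr (castM m))⁻¹
    rw [SemidirectProduct.inl_aut, map_inv]
  let π : ((Multiplicative (ZMod (Nat.card (commutator G))) → Multiplicative (ZMod 2))
        ⋊[preφ] Multiplicative ℤ)
      →* WreathC2 (Multiplicative (ZMod (Nat.card (commutator G)))) :=
    SemidirectProduct.lift SemidirectProduct.inl (SemidirectProduct.inr.comp castM) compat2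
  have πsurj : Function.Surjective π := by
    intro w
    refine ⟨SemidirectProduct.inl w.left *
      SemidirectProduct.inr (Multiplicative.ofAdd ((Multiplicative.toAdd w.right).val : ℤ)), ?_⟩
    have harg : castM (Multiplicative.ofAdd ((Multiplicative.toAdd w.right).val : ℤ))
        = w.right := by
      show Multiplicative.ofAdd (((Multiplicative.toAdd w.right).val : ℤ) :
        ZMod (Nat.card (commutator G))) = w.right
      rw [Int.cast_natCast]
      show Multiplicative.ofAdd ((ZMod.val (Multiplicative.toAdd w.right) : ℕ) :
        ZMod (Nat.card (commutator G))) = w.right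
      rw [ZMod.natCast_val, ZMod.cast_id]
      exact ofAdd_toAdd w.right
    rw [map_mul, SemidirectProduct.lift_inl, SemidirectProduct.lift_inr,
      MonoidHom.comp_apply, harg, SemidirectProduct.inl_left_mul_inr_right]
  have hker : ∀ x, Φ x = 1 → π x = 1 := by
    intro x hx
    rw [← SemidirectProduct.inl_left_mul_inr_right x, map_mul,
      SemidirectProduct.lift_inl, SemidirectProduct.lift_inr] at hx
    have hinvu : φ x.left = (gU x.right)⁻¹ := eq_inv_of_mul_eq_one_left hx
    have hval : (1 : MonoidAlgebra K G) + eps K z * xelt K hh x.left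
        = MonoidAlgebra.of K G ((g ^ (Multiplicative.toAdd x.right))⁻¹) := by
      have := congrArg (Units.val) hinvu
      rwa [hgUinv] at this
    obtain ⟨hv1, hw1⟩ := main_inj K z hz1 hz2 hh hinj hzne hne1 hnez x.left _ hval
    have hgj : g ^ (Multiplicative.toAdd x.right) = 1 := by
      rwa [inv_eq_one] at hw1
    have hdvd : ((Nat.card (commutator G) : ℤ)) ∣ Multiplicative.toAdd x.right := by
      have h1 : ((orderOf g : ℤ)) ∣ Multiplicative.toAdd x.right :=
        orderOf_dvd_iff_zpow_eq_one.2 hgj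
      exact dvd_trans (Int.natCast_dvd_natCast.2 hno) h1
    rw [← SemidirectProduct.inl_left_mul_inr_right x, map_mul,
      SemidirectProduct.lift_inl, SemidirectProduct.lift_inr, hv1, map_one, one_mul]
    show SemidirectProduct.inr (φ := wreathMap (Multiplicative (ZMod (Nat.card (commutator G))))) (castM x.right) = 1
    have : castM x.right = 1 := by
      show Multiplicative.ofAdd ((Multiplicative.toAdd x.right : ℤ) :
        ZMod (Nat.card (commutator G))) = 1
      rw [(ZMod.intCast_zmod_eq_zero_iff_dvd _ _).2 hdvd]
      rfl
    rw [this, map_one]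
  let e := QuotientGroup.quotientKerEquivRange Φ
  let ψ := (QuotientGroup.lift Φ.ker π hker).comp e.symm.toMonoidHom
  have hψs : Function.Surjective ψ := by
    intro w
    obtain ⟨x, hx⟩ := πsurj w
    refine ⟨e (QuotientGroup.mk x), ?_⟩
    show (QuotientGroup.lift Φ.ker π hker) (e.symm (e (QuotientGroup.mk x))) = w
    rw [MulEquiv.symm_apply_apply]
    change π x = w
    exact hx
  exact ⟨Φ.range, ψ.ker, inferInstance,
    ⟨QuotientGroup.quotientKerEquivOfSurjective ψ hψs⟩⟩
end
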